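/- arXiv:0810.2060 — 12 statements merged into one kernel-verified Lean document; each statement's English description precedes it below -/
import Mathlib

section
/- Let G be a second-countable profinite group. Then the virtual center VZ(G) is a closed subset of G if and only if there exists an open subgroup U of G such that VZ(U) = Z(U), i.e., such that every element u of U whose centralizer in U is open in U lies in the center of U. -/
section Aux

variable {G : Type*} [Group G] [TopologicalSpace G] [IsTopologicalGroup G]

/-- The virtual center as a subgroup. -/
def VZaux (G : Type*) [Group G] [TopologicalSpace G] [IsTopologicalGroup G] : Subgroup G where
  carrier := {g : G | IsOpen ((Subgroup.centralizer {g} : Subgroup G) : Set G)}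
  one_mem' := by
    have : (Subgroup.centralizer {(1:G)} : Subgroup G) = ⊤ := by
      ext x; simp [Subgroup.mem_centralizer_iff]
    simp [Set.mem_setOf_eq, this]
  mul_mem' := by
    intro a b ha hb
    refine Subgroup.isOpen_mono (H₁ := Subgroup.centralizer {a} ⊓ Subgroup.centralizer {b}) ?_ ?_
    · intro x hx
      simp only [Subgroup.mem_inf, Subgroup.mem_centralizer_iff, Set.mem_singleton_iff,
        forall_eq] at hx ⊢
      rw [mul_assoc, hx.2, ← mul_assoc, hx.1, mul_assoc]
    · exact (ha.inter hb :
        IsOpen (((Subgroup.centralizer {a} ⊓ Subgroup.centralizer {b}) : Subgroup G) : Set G))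
  inv_mem' := by
    intro a ha
    refine Subgroup.isOpen_mono (H₁ := Subgroup.centralizer {a}) ?_ ha
    intro x hx
    simp only [Subgroup.mem_centralizer_iff, Set.mem_singleton_iff, forall_eq] at hx ⊢
    calc a⁻¹ * x = a⁻¹ * x * a * a⁻¹ := by group
    _ = a⁻¹ * a * x * a⁻¹ := by rw [mul_assoc a⁻¹ x a, ← hx, ← mul_assoc]
    _ = x * a⁻¹ := by group

lemma isClosed_centralizer_aux [T2Space G] (S : Set G) :
    IsClosed ((Subgroup.centralizer S : Subgroup G) : Set G) := by
  have : ((Subgroup.centralizer S : Subgroup G) : Set G) = ⋂ s ∈ S, {x : G | s * x = x * s} := by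
    ext x
    simp [Subgroup.mem_centralizer_iff, Set.mem_iInter]
  rw [this]
  exact isClosed_biInter fun s _ => isClosed_eq (by continuity) (by continuity)

lemma exists_openSubgroup_subset_aux [CompactSpace G] [T2Space G] [TotallyDisconnectedSpace G]
    {V : Set G} (hV : V ∈ nhds (1 : G)) :
    ∃ H : Subgroup G, IsOpen (H : Set G) ∧ (H : Set G) ⊆ V := by
  obtain ⟨W, ⟨hW1, hWc⟩, hWV⟩ := (nhds_basis_clopen (1 : G)).mem_iff.mp hV
  obtain ⟨H, hH⟩ := IsTopologicalGroup.exist_openNormalSubgroup_sub_clopen_nhds_of_one hWc hW1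
  exact ⟨H.toSubgroup, H.isOpen, fun x hx => hWV (hH hx)⟩

lemma mem_VZaux_of_centralizes {N : Subgroup G} (hN : IsOpen (N : Set G)) {g : G}
    (hg : g ∈ Subgroup.centralizer (N : Set G)) : g ∈ VZaux G := by
  refine Subgroup.isOpen_mono (H₁ := N) ?_ hN
  intro x hx
  simp only [Subgroup.mem_centralizer_iff, Set.mem_singleton_iff, forall_eq]
  exact (hg x hx).symm

end Aux

open Pointwise

/-- Proposition 2.2: For a second-countable profinite group `G`, the virtual center
`VZ(G) = {g : centralizer of g is open}` is closed iff there is an open subgroup `U`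
with `VZ(U) = Z(U)`. -/
theorem stmt_0 {G : Type*} [Group G] [TopologicalSpace G] [IsTopologicalGroup G]
    [CompactSpace G] [T2Space G] [TotallyDisconnectedSpace G]
    [SecondCountableTopology G] :
    IsClosed {g : G | IsOpen ((Subgroup.centralizer {g} : Subgroup G) : Set G)} ↔
      ∃ U : Subgroup G, IsOpen (U : Set G) ∧
        ∀ u : U, IsOpen ((Subgroup.centralizer {u} : Subgroup U) : Set U) →
          u ∈ Subgroup.center U := by
  have hVZset : {g : G | IsOpen ((Subgroup.centralizer {g} : Subgroup G) : Set G)}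
      = (VZaux G : Set G) := rfl
  rw [hVZset]
  constructor
  · -- forward
    intro hclosed
    -- countable antitone basis of nhds 1
    obtain ⟨s, hs, -⟩ := IsTopologicalGroup.exists_antitone_basis_nhds_one (G := G)
    have hsn : ∀ n, s n ∈ nhds (1 : G) := fun n => hs.mem n
    choose N hNopen hNsub using fun n => exists_openSubgroup_subset_aux (hsn n)
    have hcover : (VZaux G : Set G) = ⋃ n, ((Subgroup.centralizer ((N n : Subgroup G) : Set G) : Subgroup G) : Set G) := by
      ext g
      simp only [Set.mem_iUnion, SetLike.mem_coe]
      constructor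
      · intro hg
        have hmem : ((Subgroup.centralizer {g} : Subgroup G) : Set G) ∈ nhds (1 : G) :=
          hg.mem_nhds (by simp [Subgroup.one_mem])
        obtain ⟨n, hn⟩ := hs.toHasBasis.mem_iff.mp hmem
        refine ⟨n, ?_⟩
        intro h hh
        have : h ∈ Subgroup.centralizer {g} := hn.2 (hNsub n hh)
        simpa [Subgroup.mem_centralizer_iff] using
          (by simpa [Subgroup.mem_centralizer_iff] using this : g * h = h * g).symm
      · rintro ⟨n, hn⟩
        exact mem_VZaux_of_centralizes (hNopen n) hn
    -- Baire on the closed subset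
    haveI : CompactSpace ((VZaux G : Set G) : Set G) := isCompact_iff_compactSpace.mp hclosed.isCompact
    have hne : (VZaux G : Set G).Nonempty := ⟨1, Subgroup.one_mem _⟩
    haveI : Nonempty ((VZaux G : Set G) : Set G) := hne.to_subtype
    obtain ⟨n, ⟨x, hx⟩⟩ := nonempty_interior_of_iUnion_of_closed
      (X := ((VZaux G : Set G) : Set G))
      (f := fun n => Subtype.val ⁻¹'
        ((Subgroup.centralizer ((N n : Subgroup G) : Set G) : Subgroup G) : Set G))
      (fun n => (isClosed_centralizer_aux _).preimage continuous_subtype_val)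
      (by
        ext y
        simp only [Set.mem_iUnion, Set.mem_preimage, Set.mem_univ, iff_true]
        rw [Set.ext_iff] at hcover
        have := (hcover (y : G)).mp y.2
        simpa using this)
    -- extract open set
    have hxF : (x : G) ∈ (Subgroup.centralizer ((N n : Subgroup G) : Set G) : Subgroup G) :=
      Set.mem_preimage.mp (interior_subset hx)
    rw [mem_interior_iff_mem_nhds, nhds_subtype_eq_comap, Filter.mem_comap] at hx
    obtain ⟨V, hVmem, hVsub⟩ := hx
    obtain ⟨V', hV'sub, hV'open, hxV'⟩ := mem_nhds_iff.mp hVmem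
    set v : G := (x : G) with hv
    have hvVZ : v ∈ VZaux G := x.2
    -- key: V' ∩ VZ ⊆ centralizer (N n)
    have hkey : ∀ y : G, y ∈ V' → y ∈ VZaux G →
        y ∈ Subgroup.centralizer ((N n : Subgroup G) : Set G) := by
      intro y hy hyVZ
      have : (⟨y, hyVZ⟩ : ((VZaux G : Set G) : Set G)) ∈ Subtype.val ⁻¹' V :=
        hV'sub hy
      exact hVsub this
    -- open subgroup W with v • W ⊆ V'
    have hpre : (fun w : G => v * w) ⁻¹' V' ∈ nhds (1 : G) := by
      have : Continuous (fun w : G => v * w) := continuous_const.mul continuous_id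
      exact this.continuousAt.preimage_mem_nhds (by simpa using hV'open.mem_nhds hxV')
    obtain ⟨W, hWopen, hWsub⟩ := exists_openSubgroup_subset_aux hpre
    have hUopen : IsOpen ((W ⊓ N n : Subgroup G) : Set G) := by
      have : ((W ⊓ N n : Subgroup G) : Set G) = (W : Set G) ∩ (N n : Set G) := rfl
      rw [this]; exact hWopen.inter (hNopen n)
    refine ⟨W ⊓ N n, hUopen, ?_⟩
    · intro u hu
      -- centralizer of ↑u in G is open
      have humem : (u : G) ∈ VZaux G := by
        refine Subgroup.isOpen_mono
          (H₁ := (Subgroup.centralizer {u}).map (W ⊓ N n).subtype) ?_ ?_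
        · rintro x ⟨y, hy, rfl⟩
          simp only [SetLike.mem_coe, Subgroup.mem_centralizer_iff, Set.mem_singleton_iff,
            forall_eq] at hy ⊢
          exact congrArg Subtype.val hy
        · have heq : (((Subgroup.centralizer {u}).map (W ⊓ N n).subtype : Subgroup G) : Set G)
              = Subtype.val '' ((Subgroup.centralizer {u} : Subgroup (W ⊓ N n : Subgroup G)) : Set (W ⊓ N n : Subgroup G)) := by
            rw [Subgroup.coe_map, Subgroup.coe_subtype]
          rw [heq]
          exact hUopen.isOpenEmbedding_subtypeVal.isOpenMap _ hu
      -- ↑u ∈ W hence ↑u centralizes N n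
      have huW : (u : G) ∈ W := u.2.1
      have huN : (u : G) ∈ Subgroup.centralizer ((N n : Subgroup G) : Set G) := by
        have hvu : v * (u : G) ∈ V' := hWsub huW
        have hvuVZ : v * (u : G) ∈ VZaux G := mul_mem hvVZ humem
        have h1 : v * (u : G) ∈ Subgroup.centralizer ((N n : Subgroup G) : Set G) :=
          hkey _ hvu hvuVZ
        have := mul_mem (inv_mem hxF) h1
        simpa using this
      -- conclude u central in U
      rw [Subgroup.mem_center_iff]
      intro g
      have hgN : (g : G) ∈ N n := g.2.2
      have := huN (g : G) hgN
      exact Subtype.ext (by push_cast; exact this)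
  · -- backward
    rintro ⟨U, hUopen, hU⟩
    set Z : Set G := (U : Set G) ∩ ((Subgroup.centralizer (U : Set G) : Subgroup G) : Set G)
      with hZ
    have hZclosed : IsClosed Z :=
      (U.isClosed_of_isOpen hUopen).inter (isClosed_centralizer_aux _)
    have hkey : (VZaux G : Set G) ∩ (U : Set G) = Z := by
      ext g
      constructor
      · rintro ⟨hgVZ, hgU⟩
        refine ⟨hgU, ?_⟩
        set u : U := ⟨g, hgU⟩
        have hopen : IsOpen ((Subgroup.centralizer {u} : Subgroup U) : Set U) := by
          have : ((Subgroup.centralizer {u} : Subgroup U) : Set U)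
              = Subtype.val ⁻¹' ((Subgroup.centralizer {g} : Subgroup G) : Set G) := by
            ext x
            simp only [SetLike.mem_coe, Set.mem_preimage, Subgroup.mem_centralizer_iff,
              Set.mem_singleton_iff, forall_eq]
            constructor
            · intro h; exact congrArg Subtype.val h
            · intro h; exact Subtype.ext h
          rw [this]
          exact hgVZ.preimage continuous_subtype_val
        have hc := hU u hopen
        rw [Subgroup.mem_center_iff] at hc
        intro h hh
        exact congrArg Subtype.val (hc ⟨h, hh⟩)
      · rintro ⟨hgU, hgC⟩
        refine ⟨?_, hgU⟩
        refine Subgroup.isOpen_mono (H₁ := U) ?_ hUopen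
        intro x hx
        simp only [Subgroup.mem_centralizer_iff, Set.mem_singleton_iff, forall_eq]
        exact (hgC x hx).symm
    -- finite cover by cosets
    obtain ⟨t, ht⟩ := isCompact_univ.elim_finite_subcover (fun g : G => g • (U : Set G))
      (fun g => hUopen.smul g)
      (fun x _ => Set.mem_iUnion.2 ⟨x, by
        rw [Set.mem_smul_set_iff_inv_smul_mem]; simpa using U.one_mem⟩)
    have hdecomp : (VZaux G : Set G) = ⋃ g ∈ t, ((VZaux G : Set G) ∩ g • (U : Set G)) := by
      apply Set.Subset.antisymm
      · intro x hx
        obtain ⟨g, hg, hxg⟩ := Set.mem_iUnion₂.mp (ht (Set.mem_univ x))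
        exact Set.mem_iUnion₂.mpr ⟨g, hg, hx, hxg⟩
      · exact Set.iUnion₂_subset fun g _ => Set.inter_subset_left
    rw [hdecomp]
    apply Set.Finite.isClosed_biUnion t.finite_toSet
    intro g _
    by_cases hne : ((VZaux G : Set G) ∩ g • (U : Set G)).Nonempty
    · obtain ⟨v, hvVZ, hvC⟩ := hne
      have heq : (VZaux G : Set G) ∩ g • (U : Set G) = v • Z := by
        ext x
        rw [Set.mem_smul_set_iff_inv_smul_mem]
        constructor
        · rintro ⟨hxVZ, hxC⟩
          rw [← hkey]
          refine ⟨mul_mem (inv_mem hvVZ) hxVZ, ?_⟩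
          rw [Set.mem_smul_set_iff_inv_smul_mem] at hvC hxC
          have := mul_mem (inv_mem hvC) hxC
          simpa [mul_assoc, smul_eq_mul] using this
        · intro hx
          rw [← hkey] at hx
          constructor
          · have := mul_mem hvVZ hx.1
            simpa [smul_eq_mul] using this
          · rw [Set.mem_smul_set_iff_inv_smul_mem] at hvC ⊢
            have := mul_mem hvC hx.2
            simpa [smul_eq_mul, mul_assoc] using this
      rw [heq]
      exact hZclosed.smul v
    · rw [Set.not_nonempty_iff_eq_empty] at hne
      rw [hne]
      exact isClosed_empty
end

section
/- Let L be a topological group with trivial virtual center, i.e., VZ(L) = {1}. Then every continuous group automorphism φ of L that fixes pointwise some open subgroup of L is the identity automorphism. -/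
/-- Proposition 2.5: If a topological group `L` has trivial virtual center, then every
(bi)continuous automorphism of `L` fixing some open subgroup pointwise is the identity. -/
theorem stmt_1 {L : Type*} [Group L] [TopologicalSpace L] [IsTopologicalGroup L]
    (hVZ : ∀ g : L, IsOpen ((Subgroup.centralizer {g} : Subgroup L) : Set L) → g = 1)
    (φ : L ≃* L) (hφ : Continuous φ) (hφ' : Continuous φ.symm)
    (hfix : ∃ U : Subgroup L, IsOpen (U : Set L) ∧ ∀ u ∈ U, φ u = u) :
    ∀ x : L, φ x = x := by
  obtain ⟨U, hU, hUfix⟩ := hfix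
  intro x
  set g : L := φ x * x⁻¹ with hg
  -- V = U ⊓ preimage of U under conjugation v ↦ x⁻¹ * v * x
  set V : Subgroup L := U ⊓ Subgroup.comap ((MulAut.conj x⁻¹).toMonoidHom) U with hV
  have hVopen : IsOpen (V : Set L) := by
    have hc : Continuous fun v : L => x⁻¹ * v * x := by continuity
    have h2 : IsOpen ((fun v : L => x⁻¹ * v * x) ⁻¹' (U : Set L)) := hU.preimage hc
    have heq : (V : Set L) = (U : Set L) ∩ ((fun v : L => x⁻¹ * v * x) ⁻¹' (U : Set L)) := by
      ext v
      simp [hV, Subgroup.mem_inf, Subgroup.mem_comap, MulAut.conj_apply, mul_assoc]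
    rw [heq]
    exact hU.inter h2
  have hcent : V ≤ Subgroup.centralizer {g} := by
    intro v hv
    rw [hV, Subgroup.mem_inf] at hv
    obtain ⟨hv1, hv2⟩ := hv
    rw [Subgroup.mem_comap] at hv2
    have hv2 : x⁻¹ * v * x ∈ U := by simpa [MulAut.conj_apply, mul_assoc] using hv2
    have h1 : φ v = v := hUfix v hv1
    have h2 : φ (x⁻¹ * v * x) = x⁻¹ * v * x := hUfix _ (by simpa using hv2)
    rw [Subgroup.mem_centralizer_iff]
    intro y hy
    rcases hy with rfl
    have h3 : (φ x)⁻¹ * v * φ x = x⁻¹ * v * x := by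
      have := h2
      simp only [map_mul, map_inv, h1] at this
      exact this
    have h4 : v * φ x * x⁻¹ = φ x * x⁻¹ * v := by
      have := congrArg (fun z => φ x * z * x⁻¹) h3
      simp only [mul_assoc] at this ⊢
      simpa [mul_assoc] using this
    simpa [hg, mul_assoc] using h4.symm
  have hgopen : IsOpen ((Subgroup.centralizer {g} : Subgroup L) : Set L) :=
    Subgroup.isOpen_mono hcent hVopen
  have : g = 1 := hVZ g hgopen
  have := mul_inv_eq_one.mp this
  simpa using this
end

section
/- Let L be a topological group with trivial virtual center VZ(L) = {1}. Let U and V be open subgroups of L and let φ : U → V be a topological group isomorphism such that φ restricts to the identity on some open subgroup W of L with W ⊆ U ∩ V. Then U = V and φ is the identity map of U. -/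
/-- Proposition 2.6: Let `L` be a topological group with trivial virtual center, and let
`φ : U → V` be a topological isomorphism between open subgroups of `L` restricting to the
identity on an open subgroup `W ⊆ U ⊓ V`. Then `U = V` and `φ` is the identity. -/
theorem stmt_2 {L : Type*} [Group L] [TopologicalSpace L] [IsTopologicalGroup L]
    (hVZ : ∀ g : L, IsOpen ((Subgroup.centralizer {g} : Subgroup L) : Set L) → g = 1)
    (U V W : Subgroup L) (hU : IsOpen (U : Set L)) (hV : IsOpen (V : Set L))
    (hW : IsOpen (W : Set L)) (hWU : W ≤ U) (hWV : W ≤ V)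
    (φ : U ≃* V) (hφ : Continuous φ) (hφ' : Continuous φ.symm)
    (hid : ∀ (w : L) (hw : w ∈ W), (φ ⟨w, hWU hw⟩ : L) = w) :
    U = V ∧ ∀ u : U, (φ u : L) = (u : L) := by
  have key : ∀ u : U, (φ u : L) = (u : L) := by
    intro u
    set g : L := (u : L)⁻¹ * (φ u : L) with hg
    -- the open subgroup K = W ⊓ u⁻¹ W u
    set K : Subgroup L := W ⊓ W.comap (MulAut.conj (u : L)).toMonoidHom with hK
    have hKopen : IsOpen (K : Set L) := by
      have : (K : Set L) = (W : Set L) ∩ (fun x => (u : L) * x * (u : L)⁻¹) ⁻¹' W := rfl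
      rw [this]
      exact hW.inter (hW.preimage (by continuity))
    have hKle : K ≤ Subgroup.centralizer {g} := by
      intro w hwK
      obtain ⟨hw, hw'⟩ := hwK
      have hw' : (u : L) * w * (u : L)⁻¹ ∈ W := hw'
      rw [Subgroup.mem_centralizer_singleton_iff]
      have h1 : (φ ⟨w, hWU hw⟩ : L) = w := hid w hw
      have h2 : (φ ⟨(u : L) * w * (u : L)⁻¹, hWU hw'⟩ : L) = (u : L) * w * (u : L)⁻¹ :=
        hid _ hw'
      have heq : (⟨(u : L) * w * (u : L)⁻¹, hWU hw'⟩ : U) = u * ⟨w, hWU hw⟩ * u⁻¹ := by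
        ext; simp
      rw [heq] at h2
      simp only [map_mul, map_inv, Subgroup.coe_mul, Subgroup.coe_inv, h1] at h2
      -- h2 : (φ u : L) * w * (φ u : L)⁻¹ = u * w * u⁻¹
      have h3 : g * w = w * g := by
        rw [hg]
        calc (u : L)⁻¹ * (φ u : L) * w
            = (u : L)⁻¹ * ((φ u : L) * w * (φ u : L)⁻¹) * (φ u : L) := by group
          _ = (u : L)⁻¹ * ((u : L) * w * (u : L)⁻¹) * (φ u : L) := by rw [h2]
          _ = w * ((u : L)⁻¹ * (φ u : L)) := by group
      exact h3.symm
    have hg1 : g = 1 := hVZ g (Subgroup.isOpen_mono hKle hKopen)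
    have := hg1
    rw [hg] at this
    rw [inv_mul_eq_one] at this
    exact this.symm
  refine ⟨le_antisymm ?_ ?_, key⟩
  · intro x hx
    have h : ((φ ⟨x, hx⟩ : V) : L) = x := key ⟨x, hx⟩
    exact h ▸ (φ ⟨x, hx⟩).2
  · intro x hx
    have h : ((φ (φ.symm ⟨x, hx⟩) : V) : L) = ((φ.symm ⟨x, hx⟩ : U) : L) := key _
    rw [φ.apply_symm_apply] at h
    have h' : x = ((φ.symm ⟨x, hx⟩ : U) : L) := h
    exact h' ▸ (φ.symm ⟨x, hx⟩).2
end

section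
/- Let L be a topological group that is Hausdorff, locally compact, and totally disconnected, topologically simple, and compactly generated. Then L is second countable (its topology has a countable base). -/
open Set Pointwise

/-- Van Dantzig: a t.d.l.c. group has a compact open subgroup. -/
theorem aux_vanDantzig {L : Type*} [Group L] [TopologicalSpace L] [IsTopologicalGroup L]
    [T2Space L] [LocallyCompactSpace L] [TotallyDisconnectedSpace L] :
    ∃ H : Subgroup L, IsOpen (H : Set L) ∧ IsCompact (H : Set L) := by
  obtain ⟨s, s_mem, _, scomp⟩ := local_compact_nhds (x := (1 : L)) (n := univ) Filter.univ_mem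
  obtain ⟨V, hVclopen, hV1, hVs⟩ :=
    (loc_compact_Haus_tot_disc_of_zero_dim (H := L)).mem_nhds_iff.mp s_mem
  have hVcomp : IsCompact V := scomp.of_isClosed_subset hVclopen.1 hVs
  obtain ⟨U, hU, hVU⟩ := compact_open_separated_mul_right hVcomp hVclopen.2 subset_rfl
  obtain ⟨W0, hW0U, hW0open, hW01⟩ := mem_nhds_iff.mp hU
  set W : Set L := W0 ∩ W0⁻¹ with hW
  have hWopen : IsOpen W := hW0open.inter (hW0open.preimage continuous_inv)
  have hW1 : (1 : L) ∈ W := ⟨hW01, by simpa using hW01⟩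
  let S : Subgroup L :=
    { carrier := {g : L | V * ({g} : Set L) = V}
      one_mem' := by simp
      mul_mem' := by
        intro a b ha hb
        have : V * ({a * b} : Set L) = (V * {a}) * {b} := by
          rw [← Set.singleton_mul_singleton, mul_assoc]
        simp only [Set.mem_setOf_eq] at ha hb ⊢
        rw [this, ha, hb]
      inv_mem' := by
        intro a ha
        simp only [Set.mem_setOf_eq] at ha ⊢
        calc V * {a⁻¹} = (V * {a}) * {a⁻¹} := by rw [ha]
          _ = V := by
            rw [mul_assoc, Set.singleton_mul_singleton, mul_inv_cancel]
            simp }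
  have hsub : ∀ g ∈ W, V * {g} ⊆ V := by
    intro g hg
    refine subset_trans ?_ hVU
    exact Set.mul_subset_mul_left (Set.singleton_subset_iff.mpr (hW0U hg.1))
  have hWS : W ⊆ (S : Set L) := by
    intro g hg
    have hginv : g⁻¹ ∈ W := ⟨by simpa using hg.2, by simpa using hg.1⟩
    show V * {g} = V
    refine subset_antisymm (hsub g hg) ?_
    intro v hv
    have : v * g⁻¹ ∈ V := hsub g⁻¹ hginv (Set.mul_mem_mul hv rfl)
    have : (v * g⁻¹) * g ∈ V * {g} := Set.mul_mem_mul this rfl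
    simpa using this
  refine ⟨Subgroup.closure W, ?_, ?_⟩
  · exact Subgroup.isOpen_of_mem_nhds _ (Filter.mem_of_superset (hWopen.mem_nhds hW1)
      (Subgroup.subset_closure))
  · have hHV : (Subgroup.closure W : Set L) ⊆ V := by
      intro h hh
      have hhS : h ∈ S := (Subgroup.closure_le S).mpr hWS hh
      have : (1 : L) * h ∈ V * {h} := Set.mul_mem_mul hV1 rfl
      rw [show V * {h} = V from hhS] at this
      simpa using this
    have hclosed : IsClosed (Subgroup.closure W : Set L) :=
      Subgroup.isClosed_of_isOpen _ (Subgroup.isOpen_of_mem_nhds _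
        (Filter.mem_of_superset (hWopen.mem_nhds hW1) Subgroup.subset_closure))
    exact hVcomp.of_isClosed_subset hclosed hHV

theorem aux_list_prod_mem_pow {M : Type*} [Monoid M] {s : Set M} :
    ∀ l : List M, (∀ y ∈ l, y ∈ s) → l.prod ∈ s ^ l.length := by
  intro l
  induction l with
  | nil => intro _; simp [Set.mem_one]
  | cons a t ih =>
    intro h
    rw [List.prod_cons, List.length_cons, pow_succ']
    exact Set.mul_mem_mul (h a (List.mem_cons_self))
      (ih fun y hy => h y (List.mem_cons_of_mem a hy))

theorem aux_isCompact_pow {M : Type*} [Monoid M] [TopologicalSpace M] [ContinuousMul M]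
    {s : Set M} (hs : IsCompact s) : ∀ n : ℕ, IsCompact (s ^ n)
  | 0 => by
    rw [pow_zero, ← Set.singleton_one]
    exact isCompact_singleton
  | (n + 1) => by
    rw [pow_succ]
    exact (aux_isCompact_pow hs n).mul hs

/-- Proposition 4.1: A compactly generated, topologically simple t.d.l.c. group is
second countable. -/
theorem stmt_3 {L : Type*} [Group L] [TopologicalSpace L] [IsTopologicalGroup L]
    [T2Space L] [LocallyCompactSpace L] [TotallyDisconnectedSpace L]
    [Nontrivial L]
    (hsimple : ∀ N : Subgroup L, N.Normal → IsClosed (N : Set L) → N = ⊥ ∨ N = ⊤)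
    (hcg : ∃ K : Set L, IsCompact K ∧ Subgroup.closure K = ⊤) :
    SecondCountableTopology L := by
  obtain ⟨H, Hopen, Hcomp⟩ := aux_vanDantzig (L := L)
  obtain ⟨K, hKcomp, hKgen⟩ := hcg
  have Hclosed : IsClosed (H : Set L) := Subgroup.isClosed_of_isOpen H Hopen
  rcases hsimple H.normalCore H.normalCore_normal (Subgroup.normalCore_isClosed H Hclosed)
    with hbot | htop
  · -- main case: the core of H is trivial
    haveI hQdis : DiscreteTopology (L ⧸ H) := QuotientGroup.discreteTopology Hopen
    -- countability of the quotient
    set C : Set L := K ∪ (H : Set L) with hC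
    set D : Set L := C ∪ C⁻¹ with hD
    have hDcomp : IsCompact D := (hKcomp.union Hcomp).union (hKcomp.union Hcomp).inv
    have hx : ∀ x : L, ∃ n : ℕ, x ∈ D ^ n := by
      intro x
      have hx1 : x ∈ Subgroup.closure C := by
        have hle : Subgroup.closure K ≤ Subgroup.closure C :=
          Subgroup.closure_mono Set.subset_union_left
        exact hle (hKgen ▸ Subgroup.mem_top x)
      have hx2 : x ∈ Submonoid.closure (C ∪ C⁻¹) := by
        rw [← Subgroup.closure_toSubmonoid]
        exact hx1
      obtain ⟨l, hl, hprod⟩ := Submonoid.exists_list_of_mem_closure hx2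
      exact ⟨l.length, hprod ▸ aux_list_prod_mem_pow l hl⟩
    haveI hQcount : Countable (L ⧸ H) := by
      rw [← Set.countable_univ_iff]
      have hcover : (Set.univ : Set (L ⧸ H)) ⊆
          ⋃ n : ℕ, (QuotientGroup.mk : L → L ⧸ H) '' (D ^ n) := by
        intro q _
        obtain ⟨a, rfl⟩ := QuotientGroup.mk_surjective q
        obtain ⟨n, hn⟩ := hx a
        exact Set.mem_iUnion.mpr ⟨n, ⟨a, hn, rfl⟩⟩
      refine Set.Countable.mono hcover ?_
      refine Set.countable_iUnion fun n => ?_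
      exact (((aux_isCompact_pow hDcomp n).image
        QuotientGroup.continuous_mk).finite_of_discrete).countable
    haveI : SecondCountableTopology (L ⧸ H) := inferInstance
    -- the faithful action on the quotient
    let f : L → (L ⧸ H) → (L ⧸ H) := fun g q => g • q
    have hfcont : Continuous f := by
      apply continuous_pi
      intro q
      obtain ⟨a, rfl⟩ := QuotientGroup.mk_surjective q
      have heq : (fun g : L => g • (QuotientGroup.mk a : L ⧸ H)) =
          (fun g : L => (QuotientGroup.mk (g * a) : L ⧸ H)) := by
        funext g
        rfl
      show Continuous fun g : L => g • (QuotientGroup.mk a : L ⧸ H)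
      rw [heq]
      exact QuotientGroup.continuous_mk.comp (continuous_mul_right a)
    have hfinj : Function.Injective f := by
      intro g1 g2 hg
      have hker : g1⁻¹ * g2 ∈ H.normalCore := by
        rw [Subgroup.normalCore_eq_ker, MonoidHom.mem_ker]
        refine Equiv.ext fun q => ?_
        have h1 : g1 • q = g2 • q := congrFun hg q
        show (g1⁻¹ * g2) • q = q
        rw [mul_smul, ← h1, inv_smul_smul]
      rw [hbot, Subgroup.mem_bot] at hker
      exact inv_mul_eq_one.mp hker
    haveI : CompactSpace ((H : Set L) : Type _) := isCompact_iff_compactSpace.mp Hcomp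
    haveI hHsc : SecondCountableTopology ((H : Set L) : Type _) := by
      have hcont : Continuous (fun h : (H : Set L) => f (h : L)) :=
        hfcont.comp continuous_subtype_val
      have hinj : Function.Injective (fun h : (H : Set L) => f (h : L)) :=
        fun a b hab => Subtype.ext (hfinj hab)
      exact (hcont.isClosedEmbedding hinj).isEmbedding.secondCountableTopology
    -- cover L by cosets of H
    let U : (L ⧸ H) → Set L := fun q => (QuotientGroup.mk : L → L ⧸ H) ⁻¹' {q}
    haveI : ∀ q, SecondCountableTopology (U q) := by
      intro q
      obtain ⟨a, rfl⟩ := QuotientGroup.mk_surjective q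
      have heq : U (QuotientGroup.mk a) = (Homeomorph.mulLeft a) '' (H : Set L) := by
        ext g
        simp only [U, Set.mem_preimage, Set.mem_singleton_iff, Set.mem_image,
          Homeomorph.coe_mulLeft]
        constructor
        · intro hmk
          refine ⟨a⁻¹ * g, ?_, by group⟩
          have := QuotientGroup.eq.mp hmk.symm
          exact this
        · rintro ⟨h, hh, rfl⟩
          exact (QuotientGroup.eq.mpr (by simpa using hh)).symm
      rw [heq]
      exact ((Homeomorph.mulLeft a).image (H : Set L)).symm.isEmbedding.secondCountableTopology
    refine TopologicalSpace.secondCountableTopology_of_countable_cover (U := U) ?_ ?_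
    · intro q
      exact (isOpen_discrete ({q} : Set (L ⧸ H))).preimage QuotientGroup.continuous_mk
    · ext g
      simp only [Set.mem_iUnion, Set.mem_univ, iff_true]
      exact ⟨QuotientGroup.mk g, rfl⟩
  · -- degenerate case: L is compact, hence finite and discrete
    have hHtop : H = ⊤ := top_le_iff.mp (htop ▸ H.normalCore_le)
    haveI : CompactSpace L := by
      rw [hHtop] at Hcomp
      exact isCompact_univ_iff.mp (by simpa using Hcomp)
    obtain ⟨x, hx⟩ := exists_ne (1 : L)
    obtain ⟨W, hWclopen, hW1, hWx⟩ :=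
      compact_exists_isClopen_in_isOpen (isOpen_compl_singleton (x := x))
        (by simpa using hx.symm)
    obtain ⟨M, hM⟩ := IsTopologicalGroup.exist_openNormalSubgroup_sub_clopen_nhds_of_one hWclopen hW1
    rcases hsimple M.toSubgroup M.isNormal'
        (Subgroup.isClosed_of_isOpen _ M.toOpenSubgroup.isOpen) with hMbot | hMtop
    · haveI : DiscreteTopology L := by
        apply discreteTopology_of_isOpen_singleton_one
        rw [show ({1} : Set L) = ((⊥ : Subgroup L) : Set L) by simp, ← hMbot]
        exact M.toOpenSubgroup.isOpen
      haveI : Finite L := finite_of_compact_of_discrete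
      exact DiscreteTopology.secondCountableTopology_of_countable
    · exfalso
      have : x ∈ M.toSubgroup := hMtop ▸ Subgroup.mem_top x
      exact hWx (hM this) rfl
end

section
/- Let L be a topological group possessing an open compact subgroup (for instance any t.d.l.c. group). If N is a normal subgroup of L that is discrete in the subspace topology, then N is contained in the virtual center VZ(L), i.e., every element of N has open centralizer in L. In particular, if VZ(L) = {1}, then every discrete normal subgroup of L is trivial. -/
/-- Proposition 5.2(a): In a topological group possessing an open compact subgroup,
every discrete normal subgroup is contained in the virtual center; in particular,
if the virtual center is trivial, every discrete normal subgroup is trivial. -/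
theorem stmt_5 {L : Type*} [Group L] [TopologicalSpace L] [IsTopologicalGroup L]
    (hoc : ∃ G : Subgroup L, IsOpen (G : Set L) ∧ IsCompact (G : Set L))
    (N : Subgroup L) (hN : N.Normal) (hdisc : DiscreteTopology N) :
    (∀ g ∈ N, IsOpen ((Subgroup.centralizer {g} : Subgroup L) : Set L)) ∧
      ((∀ g : L, IsOpen ((Subgroup.centralizer {g} : Subgroup L) : Set L) → g = 1) →
        N = ⊥) := by
  have main : ∀ g ∈ N, IsOpen ((Subgroup.centralizer {g} : Subgroup L) : Set L) := by
    intro g hg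
    -- {⟨g, hg⟩} is open in N, so there exists open U in L with U ∩ N-members giving only g
    have hsing : IsOpen ({(⟨g, hg⟩ : N)} : Set N) := isOpen_discrete _
    rw [isOpen_induced_iff] at hsing
    obtain ⟨U, hU, hUg⟩ := hsing
    have hgU : g ∈ U := by
      have : (⟨g, hg⟩ : N) ∈ (Subtype.val ⁻¹' U : Set N) := by
        rw [hUg]; rfl
      exact this
    -- conjugation map
    have hcont : Continuous fun x : L => x * g * x⁻¹ := by continuity
    set V : Set L := (fun x : L => x * g * x⁻¹) ⁻¹' U with hV
    have hVopen : IsOpen V := hU.preimage hcont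
    have h1V : (1 : L) ∈ V := by
      simp [hV, hgU]
    have hVsub : V ⊆ (Subgroup.centralizer {g} : Subgroup L) := by
      intro x hx
      have hxN : x * g * x⁻¹ ∈ N := hN.conj_mem g hg x
      have : (⟨x * g * x⁻¹, hxN⟩ : N) ∈ (Subtype.val ⁻¹' U : Set N) := hx
      rw [hUg] at this
      have heq : x * g * x⁻¹ = g := congrArg Subtype.val this
      rw [SetLike.mem_coe, Subgroup.mem_centralizer_iff]
      intro h hh
      rw [Set.mem_singleton_iff] at hh
      subst hh
      have : x * h = h * x := by
        have := heq
        group at this ⊢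
        calc x * h = (x * h * x⁻¹) * x := by group
        _ = h * x := by rw [heq]
      exact this.symm
    exact
      Subgroup.isOpen_of_mem_nhds _ (Filter.mem_of_superset (hVopen.mem_nhds h1V) hVsub)
  refine ⟨main, fun htriv => ?_⟩
  ext x
  simp only [Subgroup.mem_bot]
  constructor
  · intro hx
    exact htriv x (main x hx)
  · intro hx; subst hx; exact N.one_mem
end

section
/- Let L be a topological group possessing an open compact subgroup and with trivial virtual center VZ(L) = {1}. Let M be a nontrivial closed normal subgroup of L and let U be an open subgroup of L. Then M ∩ U ≠ {1}. -/
/-- Proposition 5.2(b): Let `L` be a topological group possessing an open compact subgroup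
and with trivial virtual center. If `M` is a nontrivial closed normal subgroup of `L` and
`U` is an open subgroup of `L`, then `M ∩ U ≠ {1}`. -/
theorem stmt_6 {L : Type*} [Group L] [TopologicalSpace L] [IsTopologicalGroup L]
    (hoc : ∃ G : Subgroup L, IsOpen (G : Set L) ∧ IsCompact (G : Set L))
    (hVZ : ∀ g : L, IsOpen ((Subgroup.centralizer {g} : Subgroup L) : Set L) → g = 1)
    (M : Subgroup L) (hM : M.Normal) (hMclosed : IsClosed (M : Set L)) (hMne : M ≠ ⊥)
    (U : Subgroup L) (hU : IsOpen (U : Set L)) :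
    M ⊓ U ≠ ⊥ := by
  intro h
  apply hMne
  rw [Subgroup.eq_bot_iff_forall] at h ⊢
  intro m hm
  apply hVZ
  -- the centralizer of m contains an open neighborhood of 1
  have hcont : Continuous fun g : L => g * m * g⁻¹ * m⁻¹ := by continuity
  have hmem : (1 : L) * m * (1 : L)⁻¹ * m⁻¹ ∈ (U : Set L) := by
    simp [U.one_mem]
  have hV : (fun g : L => g * m * g⁻¹ * m⁻¹) ⁻¹' (U : Set L) ∈ nhds (1 : L) :=
    hcont.continuousAt.preimage_mem_nhds (hU.mem_nhds hmem)
  have hsub : (fun g : L => g * m * g⁻¹ * m⁻¹) ⁻¹' (U : Set L) ⊆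
      (Subgroup.centralizer {m} : Set L) := by
    intro g hg
    have hMmem : g * m * g⁻¹ * m⁻¹ ∈ M :=
      M.mul_mem (hM.conj_mem m hm g) (M.inv_mem hm)
    have h1 := h _ ⟨hMmem, hg⟩
    have h2 : g * m * g⁻¹ = m := by
      have := mul_eq_one_iff_eq_inv.mp h1
      rw [this, inv_inv]
    show g ∈ Subgroup.centralizer {m}
    rw [Subgroup.mem_centralizer_iff]
    intro x hx
    rw [Set.mem_singleton_iff] at hx
    subst hx
    calc x * g = g * x * g⁻¹ * g := by rw [h2]
    _ = g * x := by group
  exact Subgroup.isOpen_of_mem_nhds _ (Filter.mem_of_superset hV hsub)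
end

section
/- Let G be an infinite profinite group containing a nontrivial closed normal subgroup N with the following two properties: (i) N is sticky in G, i.e., for every topological group isomorphism φ : U → V between open subgroups U, V of G, the subgroup φ(N ∩ U) ∩ N has finite index in both N and φ(N ∩ U); (ii) the centralizer of N in G is nontrivial. Then G has no compactly generated, topologically simple envelope: there is no Hausdorff topological group L that is topologically simple and compactly generated, together with an injective continuous group homomorphism η : G → L whose range is open in L. -/
open Pointwise Topology


section AuxL

variable {L : Type*} [Group L] [TopologicalSpace L] [IsTopologicalGroup L]

/-- The centralizer of a single element is closed in a `T2` topological group. -/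
lemma aux_isClosed_centralizer [T2Space L] (x : L) :
    IsClosed ((Subgroup.centralizer {x} : Subgroup L) : Set L) := by
  have hset : ((Subgroup.centralizer {x} : Subgroup L) : Set L) = {g : L | x * g = g * x} := by
    ext g
    simp [Subgroup.mem_centralizer_iff]
  rw [hset]
  exact isClosed_eq (continuous_const.mul continuous_id) (continuous_id.mul continuous_const)

/-- An open subgroup has finite relative index in any compact subgroup. -/
lemma aux_relIndex_ne_zero_of_isOpen {A B : Subgroup L} (hA : IsOpen (A : Set L))
    (hB : IsCompact (B : Set L)) : A.relIndex B ≠ 0 := by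
  have hcover : (B : Set L) ⊆ ⋃ b : B, ((b : L) • (A : Set L)) := by
    intro x hx
    refine Set.mem_iUnion.2 ⟨⟨x, hx⟩, ?_⟩
    rw [Set.mem_smul_set_iff_inv_smul_mem, smul_eq_mul, inv_mul_cancel]
    exact A.one_mem
  obtain ⟨t, ht⟩ := hB.elim_finite_subcover (fun b : B => (b : L) • (A : Set L))
    (fun b => hA.smul _) hcover
  have hfin : Finite (↥B ⧸ A.subgroupOf B) := by
    have hsurj : Function.Surjective
        (fun i : t => (QuotientGroup.mk (i : ↥B) : ↥B ⧸ A.subgroupOf B)) := by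
      intro x
      obtain ⟨b, rfl⟩ := QuotientGroup.mk_surjective x
      have hb := ht b.2
      rw [Set.mem_iUnion₂] at hb
      obtain ⟨i, hit, hib⟩ := hb
      refine ⟨⟨i, hit⟩, ?_⟩
      have hmem : ((i : L))⁻¹ * b ∈ A := by
        have := Set.mem_smul_set_iff_inv_smul_mem.mp hib
        rwa [smul_eq_mul] at this
      exact (QuotientGroup.eq).mpr (by simpa [Subgroup.mem_subgroupOf] using hmem)
    exact Finite.of_surjective _ hsurj
  show (A.subgroupOf B).index ≠ 0
  exact Subgroup.index_ne_zero_of_finite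

lemma aux_centralizer_mul {x y : L} :
    Subgroup.centralizer {x} ⊓ Subgroup.centralizer {y} ≤ Subgroup.centralizer {x * y} := by
  rintro z hz
  rw [Subgroup.mem_inf] at hz
  obtain ⟨hzx, hzy⟩ := hz
  have h1 : x * z = z * x := Subgroup.mem_centralizer_iff.mp hzx x rfl
  have h2 : y * z = z * y := Subgroup.mem_centralizer_iff.mp hzy y rfl
  rw [Subgroup.mem_centralizer_iff]
  rintro m rfl
  calc x * y * z = x * (y * z) := by group
    _ = x * (z * y) := by rw [h2]
    _ = (x * z) * y := by group
    _ = (z * x) * y := by rw [h1]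
    _ = z * (x * y) := by group

lemma aux_centralizer_inv (x : L) :
    Subgroup.centralizer {x⁻¹} = Subgroup.centralizer {x} := by
  ext z
  simp only [Subgroup.mem_centralizer_iff, Set.mem_singleton_iff, forall_eq]
  constructor
  · intro H
    calc x * z = x * (z * x⁻¹) * x := by group
      _ = x * (x⁻¹ * z) * x := by rw [← H]
      _ = z * x := by group
  · intro H
    calc x⁻¹ * z = x⁻¹ * (z * x) * x⁻¹ := by group
      _ = x⁻¹ * (x * z) * x⁻¹ := by rw [← H]
      _ = z * x⁻¹ := by group

end AuxL


section AuxComm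

variable {G : Type*} [Group G] [TopologicalSpace G] [IsTopologicalGroup G]
  [CompactSpace G] [T2Space G]
  {L : Type*} [Group L] [TopologicalSpace L] [IsTopologicalGroup L] [T2Space L]

/-- Stickiness implies that the image of `N` is commensurated in `L`. -/
lemma aux_comm (η : G →* L) (hη : Continuous η) (hinj : Function.Injective ⇑η)
    (hrange : IsOpen (Set.range ⇑η)) (N : Subgroup G)
    (hsticky : ∀ (U V : Subgroup G), IsOpen (U : Set G) → IsOpen (V : Set G) →
      ∀ φ : U ≃* V, Continuous φ → Continuous φ.symm →
        (((N.subgroupOf U).map φ.toMonoidHom).map V.subtype).relIndex N ≠ 0 ∧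
        N.relIndex (((N.subgroupOf U).map φ.toMonoidHom).map V.subtype) ≠ 0)
    (h : L) :
    ((N.map η).map (MulAut.conj h).toMonoidHom).relIndex (N.map η) ≠ 0 := by
  classical
  -- the continuous bijection onto the range and its continuous inverse
  have hfwd : Continuous (⇑(Equiv.ofInjective ⇑η hinj)) := by
    apply continuous_induced_rng.mpr
    have : Subtype.val ∘ ⇑(Equiv.ofInjective ⇑η hinj) = ⇑η := rfl
    rw [this]; exact hη
  set ρ : Set.range ⇑η → G := ⇑(Equiv.ofInjective ⇑η hinj).symm with hρdef
  have hρ : ∀ y : Set.range ⇑η, η (ρ y) = (y : L) := fun y =>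
    Equiv.apply_ofInjective_symm hinj y
  have hρcont : Continuous ρ := hfwd.continuous_symm_of_equiv_compact_to_t2
  set cjh := (MulAut.conj h).toMonoidHom with hcjh
  have hcjh_apply : ∀ x : L, cjh x = h * x * h⁻¹ := fun x => rfl
  have hconj_cont : Continuous fun x : L => h * x * h⁻¹ :=
    (continuous_const.mul continuous_id).mul continuous_const
  set U : Subgroup G := (η.range.comap cjh).comap η with hU
  set V : Subgroup G := (η.range.map cjh).comap η with hV
  have hUopen : IsOpen (U : Set G) := by
    have : (U : Set G) = ⇑η ⁻¹' (⇑cjh ⁻¹' (Set.range ⇑η)) := rfl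
    rw [this]
    exact ((hrange.preimage hconj_cont)).preimage hη
  have hVopen : IsOpen (V : Set G) := by
    have hmap : IsOpen ((η.range.map cjh : Subgroup L) : Set L) := by
      have hom : IsOpenMap ((fun x : L => x * h⁻¹) ∘ fun x : L => h * x) :=
        (Homeomorph.mulRight h⁻¹).isOpenMap.comp (Homeomorph.mulLeft h).isOpenMap
      have : ((η.range.map cjh : Subgroup L) : Set L)
          = ((fun x : L => x * h⁻¹) ∘ fun x : L => h * x) '' Set.range ⇑η := by
        rw [Subgroup.coe_map]; rfl
      rw [this]
      exact hom _ hrange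
    have : (V : Set G) = ⇑η ⁻¹' ((η.range.map cjh : Subgroup L) : Set L) := rfl
    rw [this]
    exact hmap.preimage hη
  -- membership facts
  have hmemU : ∀ u : U, h * η (u : G) * h⁻¹ ∈ Set.range ⇑η := by
    intro u
    have h2 : η (u : G) ∈ η.range.comap cjh := Subgroup.mem_comap.mp u.2
    have h3 : cjh (η (u : G)) ∈ η.range := Subgroup.mem_comap.mp h2
    rw [hcjh_apply] at h3
    obtain ⟨a, ha⟩ := h3
    exact ⟨a, ha⟩
  have hmemV : ∀ v : V, h⁻¹ * η (v : G) * h ∈ Set.range ⇑η := by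
    intro v
    have h2 : η (v : G) ∈ η.range.map cjh := Subgroup.mem_comap.mp v.2
    obtain ⟨y, hy, hyy⟩ := Subgroup.mem_map.mp h2
    obtain ⟨a, ha⟩ := hy
    refine ⟨a, ?_⟩
    rw [hcjh_apply] at hyy
    rw [ha, ← hyy]
    group
  -- the conjugation isomorphism φ : U ≃* V
  have hφmem : ∀ u : U, ρ ⟨h * η (u : G) * h⁻¹, hmemU u⟩ ∈ V := by
    intro u
    rw [hV, Subgroup.mem_comap, hρ]
    exact Subgroup.mem_map.mpr ⟨η (u : G), ⟨(u : G), rfl⟩, rfl⟩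
  have hψmem : ∀ v : V, ρ ⟨h⁻¹ * η (v : G) * h, hmemV v⟩ ∈ U := by
    intro v
    rw [hU, Subgroup.mem_comap, Subgroup.mem_comap, hρ, hcjh_apply]
    have : h * (h⁻¹ * η (v : G) * h) * h⁻¹ = η (v : G) := by group
    rw [this]
    exact ⟨(v : G), rfl⟩
  set φfun : U → V := fun u => ⟨ρ ⟨h * η (u : G) * h⁻¹, hmemU u⟩, hφmem u⟩ with hφfundef
  set ψfun : V → U := fun v => ⟨ρ ⟨h⁻¹ * η (v : G) * h, hmemV v⟩, hψmem v⟩ with hψfundef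
  have hφη : ∀ u : U, η ((φfun u : ↥V) : G) = h * η (u : G) * h⁻¹ := by
    intro u; exact hρ _
  have hψη : ∀ v : V, η ((ψfun v : G)) = h⁻¹ * η (v : G) * h := by
    intro v; exact hρ _
  set φ : ↥U ≃* ↥V :=
    { toFun := φfun
      invFun := ψfun
      left_inv := by
        intro u
        apply Subtype.ext
        apply hinj
        rw [hψη, hφη]
        group
      right_inv := by
        intro v
        apply Subtype.ext
        apply hinj
        rw [hφη, hψη]
        group
      map_mul' := by
        intro u v
        apply Subtype.ext
        apply hinj
        have hc : ((u * v : ↥U) : G) = (u : G) * (v : G) := rfl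
        have hc2 : ((φfun u * φfun v : ↥V) : G) = ((φfun u : ↥V) : G) * ((φfun v : ↥V) : G) := rfl
        show η ((φfun (u * v) : ↥V) : G) = η ((φfun u * φfun v : ↥V) : G)
        rw [hφη, hc2, map_mul, hφη, hφη, hc, map_mul]
        group } with hφdef
  have hφcoe : ∀ u : U, φ u = φfun u := fun u => rfl
  have hφsymmcoe : ∀ v : V, φ.symm v = ψfun v := fun v => rfl
  have hφcont : Continuous ⇑φ := by
    show Continuous φfun
    apply Continuous.subtype_mk
    exact hρcont.comp ((((continuous_const.mul (hη.comp continuous_subtype_val)).mul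
      continuous_const)).subtype_mk _)
  have hψcont : Continuous ⇑φ.symm := by
    show Continuous ψfun
    apply Continuous.subtype_mk
    exact hρcont.comp ((((continuous_const.mul (hη.comp continuous_subtype_val)).mul
      continuous_const)).subtype_mk _)
  obtain ⟨hstick1, -⟩ := hsticky U V hUopen hVopen φ hφcont hψcont
  -- identify the transported subgroup with a comap
  have hX : ((N.subgroupOf U).map φ.toMonoidHom).map V.subtype
      = ((N.map η).map cjh).comap η := by
    ext x
    constructor
    · intro hx
      obtain ⟨y, hy, rfl⟩ := Subgroup.mem_map.mp hx
      obtain ⟨u, hu, rfl⟩ := Subgroup.mem_map.mp hy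
      rw [Subgroup.mem_comap]
      have hval : (V.subtype) (φ.toMonoidHom u) = ((φfun u : ↥V) : G) := rfl
      rw [hval, hφη]
      refine Subgroup.mem_map.mpr ⟨η (u : G), Subgroup.mem_map.mpr ⟨(u : G),
        Subgroup.mem_subgroupOf.mp hu, rfl⟩, ?_⟩
      rw [hcjh_apply]
    · intro hx
      rw [Subgroup.mem_comap] at hx
      obtain ⟨y, hy, hyx⟩ := Subgroup.mem_map.mp hx
      obtain ⟨n, hn, rfl⟩ := Subgroup.mem_map.mp hy
      rw [hcjh_apply] at hyx
      have hnU : n ∈ U := by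
        rw [hU, Subgroup.mem_comap, Subgroup.mem_comap, hcjh_apply, hyx]
        exact ⟨x, rfl⟩
      refine Subgroup.mem_map.mpr ⟨φ.toMonoidHom ⟨n, hnU⟩, Subgroup.mem_map.mpr
        ⟨⟨n, hnU⟩, Subgroup.mem_subgroupOf.mpr hn, rfl⟩, ?_⟩
      have hval : (V.subtype) (φ.toMonoidHom ⟨n, hnU⟩) = ((φfun ⟨n, hnU⟩ : ↥V) : G) := rfl
      rw [hval]
      apply hinj
      rw [hφη]
      exact hyx
  rw [hX, Subgroup.relIndex_comap] at hstick1
  exact hstick1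

end AuxComm


section MainAux

variable {G : Type*} [Group G] [TopologicalSpace G] [IsTopologicalGroup G]
  [CompactSpace G] [T2Space G] [TotallyDisconnectedSpace G] [Infinite G]
  {L : Type*} [Group L] [TopologicalSpace L] [IsTopologicalGroup L] [T2Space L]

lemma aux_isClosed_centralizer' (x : L) :
    IsClosed ((Subgroup.centralizer {x} : Subgroup L) : Set L) := by
  have hset : ((Subgroup.centralizer {x} : Subgroup L) : Set L) = {g : L | x * g = g * x} := by
    ext g
    simp [Subgroup.mem_centralizer_iff]
  rw [hset]
  exact isClosed_eq (continuous_const.mul continuous_id) (continuous_id.mul continuous_const)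

lemma main_aux (η : G →* L) (hη : Continuous η) (hinj : Function.Injective ⇑η)
    (hrange : IsOpen (Set.range ⇑η))
    (hsimple : ∀ M : Subgroup L, M.Normal → IsClosed (M : Set L) → M = ⊥ ∨ M = ⊤)
    {K : Set L} (hKc : IsCompact K) (hKgen : Subgroup.closure K = ⊤)
    (N' : Subgroup G) (hN'norm : N'.Normal) (hN'closed : IsClosed (N' : Set G))
    (hN'inf : Infinite ↥N')
    (c : L) (hc : c ≠ 1)
    (hgen : ∀ g : L, (Subgroup.centralizer {g * c * g⁻¹}).relIndex (N'.map η) ≠ 0) :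
    False := by
  classical
  ---- Step 1 : the normal closure of c is dense
  set D := Subgroup.normalClosure ({c} : Set L) with hD
  haveI hDnormal : D.Normal := Subgroup.normalClosure_normal
  haveI : D.topologicalClosure.Normal := Subgroup.is_normal_topologicalClosure D
  have hcD : c ∈ D := Subgroup.subset_normalClosure rfl
  have hDc : D.topologicalClosure = ⊤ := by
    rcases hsimple D.topologicalClosure inferInstance D.isClosed_topologicalClosure with hbot | htop
    · exfalso
      have : c ∈ D.topologicalClosure := D.le_topologicalClosure hcD
      rw [hbot, Subgroup.mem_bot] at this
      exact hc this
    · exact htop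
  have hDdense : Dense (D : Set L) := by
    rw [dense_iff_closure_eq, ← Subgroup.topologicalClosure_coe, hDc, Subgroup.coe_top]
  ---- Step 2 : every element of D has finite "relIndex" centralizer w.r.t. N'.map η
  have hP : ∀ q ∈ D, (Subgroup.centralizer {q}).relIndex (N'.map η) ≠ 0 := by
    intro q hq
    refine Subgroup.closure_induction
      (p := fun x _ => (Subgroup.centralizer {x}).relIndex (N'.map η) ≠ 0) ?_ ?_ ?_ ?_ hq
    · intro x hx
      obtain ⟨a, ha, hconj⟩ := Group.mem_conjugatesOfSet_iff.mp hx
      obtain ⟨u, hu⟩ := isConj_iff.mp hconj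
      rw [Set.mem_singleton_iff] at ha
      subst ha
      rw [← hu]
      exact hgen u
    · show (Subgroup.centralizer {(1 : L)}).relIndex (N'.map η) ≠ 0
      have h1 : Subgroup.centralizer ({(1 : L)} : Set L) = ⊤ := by
        rw [eq_top_iff]
        intro z _
        rw [Subgroup.mem_centralizer_iff]
        rintro m rfl
        group
      rw [h1, Subgroup.relIndex_top_left]
      exact one_ne_zero
    · intro x y _ _ hx hy
      show (Subgroup.centralizer {x * y}).relIndex (N'.map η) ≠ 0
      have hle : Subgroup.centralizer {x} ⊓ Subgroup.centralizer {y}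
          ≤ Subgroup.centralizer {x * y} := by
        rintro z hz
        rw [Subgroup.mem_inf] at hz
        obtain ⟨hzx, hzy⟩ := hz
        have h1 : x * z = z * x := Subgroup.mem_centralizer_iff.mp hzx x rfl
        have h2 : y * z = z * y := Subgroup.mem_centralizer_iff.mp hzy y rfl
        rw [Subgroup.mem_centralizer_iff]
        rintro m rfl
        calc x * y * z = x * (y * z) := by group
          _ = x * (z * y) := by rw [h2]
          _ = (x * z) * y := by group
          _ = (z * x) * y := by rw [h1]
          _ = z * (x * y) := by group
      have hinf := Subgroup.relIndex_inf_ne_zero hx hy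
      intro h0
      exact hinf (zero_dvd_iff.mp (h0 ▸ Subgroup.relIndex_dvd_of_le_left (N'.map η) hle))
    · intro x _ hx
      show (Subgroup.centralizer {x⁻¹}).relIndex (N'.map η) ≠ 0
      have : Subgroup.centralizer ({x⁻¹} : Set L) = Subgroup.centralizer {x} := by
        ext z
        simp only [Subgroup.mem_centralizer_iff, Set.mem_singleton_iff, forall_eq]
        constructor
        · intro H
          calc x * z = x * (z * x⁻¹) * x := by group
            _ = x * (x⁻¹ * z) * x := by rw [← H]
            _ = z * x := by group
        · intro H
          calc x⁻¹ * z = x⁻¹ * (z * x) * x⁻¹ := by group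
            _ = x⁻¹ * (x * z) * x⁻¹ := by rw [← H]
            _ = z * x⁻¹ := by group
      rw [this]
      exact hx
  ---- Step 3 : cover K by finitely many cosets of the range with representatives in D
  have hGbopen : IsOpen ((η.range : Subgroup L) : Set L) := hrange
  have hqex : ∀ l : L, ∃ qq : L, qq ∈ D ∧ qq ∈ l • ((η.range : Subgroup L) : Set L) := by
    intro l
    obtain ⟨qq, hq1, hq2⟩ := hDdense.exists_mem_open (hGbopen.smul l)
      ⟨l, by
        rw [Set.mem_smul_set_iff_inv_smul_mem, smul_eq_mul, inv_mul_cancel]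
        exact η.range.one_mem⟩
    exact ⟨qq, hq1, hq2⟩
  choose q hqD hqmem using hqex
  have hcover : K ⊆ ⋃ l : L, l • ((η.range : Subgroup L) : Set L) := by
    intro k _
    refine Set.mem_iUnion.2 ⟨k, ?_⟩
    rw [Set.mem_smul_set_iff_inv_smul_mem, smul_eq_mul, inv_mul_cancel]
    exact η.range.one_mem
  obtain ⟨t, ht⟩ := hKc.elim_finite_subcover
    (fun l : L => l • ((η.range : Subgroup L) : Set L)) (fun l => hGbopen.smul l) hcover
  ---- Step 4 : L is generated by the range together with the q l, l ∈ t
  set S : Set L := ((η.range : Subgroup L) : Set L) ∪ (q '' (t : Set L)) with hS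
  have hHtop : Subgroup.closure S = ⊤ := by
    rw [eq_top_iff, ← hKgen]
    apply (Subgroup.closure_le _).mpr
    intro k hk
    have hk2 := ht hk
    rw [Set.mem_iUnion₂] at hk2
    obtain ⟨l, hlt, hlk⟩ := hk2
    have h1 : l⁻¹ * k ∈ η.range := by
      have := Set.mem_smul_set_iff_inv_smul_mem.mp hlk
      rwa [smul_eq_mul] at this
    have h2 : l⁻¹ * q l ∈ η.range := by
      have := Set.mem_smul_set_iff_inv_smul_mem.mp (hqmem l)
      rwa [smul_eq_mul] at this
    have hkeq : k = (q l) * ((l⁻¹ * q l)⁻¹ * (l⁻¹ * k)) := by group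
    rw [SetLike.mem_coe, hkeq]
    refine Subgroup.mul_mem _ ?_ ?_
    · exact Subgroup.subset_closure (Or.inr ⟨l, hlt, rfl⟩)
    · exact Subgroup.subset_closure (Or.inl (mul_mem (inv_mem h2) h1))
  ---- Step 5 : the common centralizer of the q l has finite relIndex in N'.map η
  set R : Subgroup L := ⨅ i : ↥t, Subgroup.centralizer {q (i : L)} with hR
  have hRrel : R.relIndex (N'.map η) ≠ 0 :=
    Subgroup.relIndex_iInf_ne_zero (fun i => hP _ (hqD (i : L)))
  have hRclosed : IsClosed (R : Set L) := by
    rw [hR, Subgroup.coe_iInf]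
    exact isClosed_iInter fun i => aux_isClosed_centralizer' _
  ---- Step 6 : pull back to G and find an open normal subgroup
  have hArel : (R.comap η).relIndex N' ≠ 0 := by
    rw [Subgroup.relIndex_comap]
    exact hRrel
  haveI : CompactSpace ↥N' := isCompact_iff_compactSpace.mp hN'closed.isCompact
  haveI hfi : ((R.comap η).subgroupOf N').FiniteIndex := ⟨hArel⟩
  have hsubclosed : IsClosed (((R.comap η).subgroupOf N' : Subgroup ↥N') : Set ↥N') := by
    have : (((R.comap η).subgroupOf N' : Subgroup ↥N') : Set ↥N')
        = (Subtype.val : ↥N' → G) ⁻¹' (((R.comap η) : Subgroup G) : Set G) := rfl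
    rw [this]
    exact (hRclosed.preimage hη).preimage continuous_subtype_val
  have hsubopen := Subgroup.isOpen_of_isClosed_of_finiteIndex _ hsubclosed
  obtain ⟨O, hOopen, hOeq⟩ := isOpen_induced_iff.mp hsubopen
  have h1O : (1 : G) ∈ O := by
    have h1 : (1 : ↥N') ∈ (Subtype.val : ↥N' → G) ⁻¹' O := by
      rw [hOeq]
      exact Subgroup.one_mem _
    simpa using h1
  obtain ⟨Vc, hVcclopen, h1Vc, hVcO⟩ := compact_exists_isClopen_in_isOpen hOopen h1O
  obtain ⟨U2, hU2⟩ :=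
    IsTopologicalGroup.exist_openNormalSubgroup_sub_clopen_nhds_of_one hVcclopen h1Vc
  set Sg : Subgroup G := U2.toOpenSubgroup.toSubgroup with hSg
  have hSgopen : IsOpen (Sg : Set G) := U2.toOpenSubgroup.isOpen
  have hSgclosed : IsClosed (Sg : Set G) := U2.toOpenSubgroup.isClosed
  haveI hSgnormal : Sg.Normal := U2.isNormal'
  have hSgsub : (Sg : Set G) ⊆ O := fun x hx => hVcO (hU2 hx)
  haveI hSNnormal : (Sg ⊓ N').Normal := by
    constructor
    intro n hn g
    rw [Subgroup.mem_inf] at hn ⊢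
    exact ⟨hSgnormal.conj_mem _ hn.1 g, hN'norm.conj_mem _ hn.2 g⟩
  have hSNA : Sg ⊓ N' ≤ R.comap η := by
    rintro x hx
    rw [Subgroup.mem_inf] at hx
    obtain ⟨hxS, hxN⟩ := hx
    have hxO : x ∈ O := hSgsub hxS
    have hmem : (⟨x, hxN⟩ : ↥N') ∈ (Subtype.val : ↥N' → G) ⁻¹' O := hxO
    rw [hOeq] at hmem
    exact Subgroup.mem_subgroupOf.mp hmem
  ---- Step 7 : W = η(Sg ⊓ N') is a closed normal subgroup of L
  set W : Subgroup L := (Sg ⊓ N').map η with hW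
  have hWclosed : IsClosed (W : Set L) := by
    rw [hW, Subgroup.coe_map]
    refine IsCompact.isClosed ?_
    refine IsCompact.image ?_ hη
    have : ((Sg ⊓ N' : Subgroup G) : Set G) = (Sg : Set G) ∩ (N' : Set G) := rfl
    rw [this]
    exact (hSgclosed.inter hN'closed).isCompact
  have hWleR : W ≤ R := by
    calc W = (Sg ⊓ N').map η := rfl
      _ ≤ (R.comap η).map η := Subgroup.map_mono hSNA
      _ ≤ R := Subgroup.map_comap_le _ _
  have hWnormal : W.Normal := by
    rw [← Subgroup.normalizer_eq_top_iff, eq_top_iff, ← hHtop]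
    apply (Subgroup.closure_le _).mpr
    rintro x (hx | hx)
    · -- elements of the range normalize W
      obtain ⟨a, rfl⟩ := hx
      rw [SetLike.mem_coe, Subgroup.mem_normalizer_iff]
      intro w
      constructor
      · intro hw
        obtain ⟨b, hb, rfl⟩ := Subgroup.mem_map.mp hw
        have : η a * η b * (η a)⁻¹ = η (a * b * a⁻¹) := by
          rw [map_mul, map_mul, map_inv]
        rw [this]
        exact Subgroup.mem_map.mpr ⟨a * b * a⁻¹, hSNnormal.conj_mem _ hb a, rfl⟩
      · intro hw
        obtain ⟨b, hb, hba⟩ := Subgroup.mem_map.mp hw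
        have hweq : w = η (a⁻¹ * b * a) := by
          rw [map_mul, map_mul, map_inv, hba]
          group
        rw [hweq]
        refine Subgroup.mem_map.mpr ⟨a⁻¹ * b * a, ?_, rfl⟩
        have := hSNnormal.conj_mem _ hb a⁻¹
        rwa [inv_inv] at this
    · -- the q l centralize W
      obtain ⟨l, hlt, rfl⟩ := hx
      rw [SetLike.mem_coe, Subgroup.mem_normalizer_iff]
      have hcentral : ∀ w ∈ W, q l * w = w * q l := by
        intro w hw
        have hwR : w ∈ R := hWleR hw
        have hwc : w ∈ Subgroup.centralizer {q l} := by
          have hle : R ≤ Subgroup.centralizer {q l} := iInf_le _ (⟨l, hlt⟩ : ↥t)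
          exact hle hwR
        exact Subgroup.mem_centralizer_iff.mp hwc (q l) rfl
      intro w
      constructor
      · intro hw
        have h1 : q l * w * (q l)⁻¹ = w := by
          rw [hcentral w hw]
          group
        rw [h1]
        exact hw
      · intro hw
        have h2 := hcentral _ hw
        have h3 : w = q l * w * (q l)⁻¹ := by
          calc w = (q l)⁻¹ * ((q l * w * (q l)⁻¹) * q l) := by group
            _ = (q l)⁻¹ * (q l * (q l * w * (q l)⁻¹)) := by rw [← h2]
            _ = q l * w * (q l)⁻¹ := by group
        rw [h3]
        exact hw
  ---- Step 8 : W is nontrivial, hence W = ⊤, hence η is surjective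
  have hWne : W ≠ ⊥ := by
    intro hbot
    rw [hW, Subgroup.map_eq_bot_iff_of_injective _ hinj] at hbot
    have hopen1 : IsOpen ({1} : Set ↥N') := by
      have : ({1} : Set ↥N') = (Subtype.val : ↥N' → G) ⁻¹' (Sg : Set G) := by
        ext x
        constructor
        · rintro rfl
          exact Sg.one_mem
        · intro hx
          have : (x : G) ∈ Sg ⊓ N' := Subgroup.mem_inf.mpr ⟨hx, x.2⟩
          rw [hbot, Subgroup.mem_bot] at this
          exact Subtype.ext this
      rw [this]
      exact hSgopen.preimage continuous_subtype_val
    haveI := discreteTopology_of_isOpen_singleton_one hopen1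
    haveI : Finite ↥N' := finite_of_compact_of_discrete
    exact not_finite ↥N'
  have hWtop : W = ⊤ := by
    rcases hsimple W hWnormal hWclosed with hbot | htop
    · exact absurd hbot hWne
    · exact htop
  have hrgtop : η.range = ⊤ := by
    rw [eq_top_iff, ← hWtop]
    exact le_trans (Subgroup.map_le_range η _) le_rfl
  have hsurj : Function.Surjective ⇑η := MonoidHom.range_eq_top.mp hrgtop
  ---- Step 9 : but then L itself would be an infinite topologically simple profinite group
  obtain ⟨a, ha⟩ := exists_ne (1 : G)
  have hacompl : IsOpen ({a}ᶜ : Set G) := isClosed_singleton.isOpen_compl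
  have h1a : (1 : G) ∈ ({a}ᶜ : Set G) := by
    simp only [Set.mem_compl_iff, Set.mem_singleton_iff]
    exact fun h => ha h.symm
  obtain ⟨Vc2, hVc2clopen, h1Vc2, hVc2sub⟩ := compact_exists_isClopen_in_isOpen hacompl h1a
  obtain ⟨U3, hU3⟩ :=
    IsTopologicalGroup.exist_openNormalSubgroup_sub_clopen_nhds_of_one hVc2clopen h1Vc2
  set Sg3 : Subgroup G := U3.toOpenSubgroup.toSubgroup with hSg3
  set M : Subgroup L := Sg3.map η with hM
  have hMnormal : M.Normal := by
    constructor
    intro n hn g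
    obtain ⟨b, hb, rfl⟩ := Subgroup.mem_map.mp hn
    obtain ⟨x, rfl⟩ := hsurj g
    have : η x * η b * (η x)⁻¹ = η (x * b * x⁻¹) := by rw [map_mul, map_mul, map_inv]
    rw [this]
    exact Subgroup.mem_map.mpr ⟨x * b * x⁻¹, U3.isNormal'.conj_mem _ hb x, rfl⟩
  have hMclosed : IsClosed (M : Set L) := by
    rw [hM, Subgroup.coe_map]
    exact (IsCompact.image (U3.toOpenSubgroup.isClosed.isCompact) hη).isClosed
  rcases hsimple M hMnormal hMclosed with hbot | htop
  · rw [hM, Subgroup.map_eq_bot_iff_of_injective _ hinj] at hbot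
    have hopen1 : IsOpen ({1} : Set G) := by
      have : ({1} : Set G) = (Sg3 : Set G) := by
        rw [hbot, Subgroup.coe_bot]
      rw [this]
      exact U3.toOpenSubgroup.isOpen
    haveI := discreteTopology_of_isOpen_singleton_one hopen1
    haveI : Finite G := finite_of_compact_of_discrete
    exact not_finite G
  · have haM : η a ∈ M := by rw [htop]; trivial
    obtain ⟨b, hb, hba⟩ := Subgroup.mem_map.mp haM
    have hbeq : b = a := hinj hba
    subst hbeq
    exact hVc2sub (hU3 hb) rfl

end MainAux



/-- Theorem 4.6: An infinite profinite group `G` containing a nontrivial closed normal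
subgroup `N` which is sticky and has nontrivial centralizer admits no compactly generated,
topologically simple envelope. -/
theorem stmt_7 {G : Type*} [Group G] [TopologicalSpace G] [IsTopologicalGroup G]
    [CompactSpace G] [T2Space G] [TotallyDisconnectedSpace G] [Infinite G]
    (N : Subgroup G) (hNne : N ≠ ⊥) (hNnormal : N.Normal)
    (hNclosed : IsClosed (N : Set G))
    -- (i) stickiness: for every topological isomorphism `φ : U → V` between open
    -- subgroups of `G`, the subgroup `φ(N ∩ U) ∩ N` has finite index in both `N`
    -- and `φ(N ∩ U)`
    (hsticky : ∀ (U V : Subgroup G), IsOpen (U : Set G) → IsOpen (V : Set G) →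
      ∀ φ : U ≃* V, Continuous φ → Continuous φ.symm →
        (((N.subgroupOf U).map φ.toMonoidHom).map V.subtype).relIndex N ≠ 0 ∧
        N.relIndex (((N.subgroupOf U).map φ.toMonoidHom).map V.subtype) ≠ 0)
    -- (ii) the centralizer of `N` in `G` is nontrivial
    (hcent : Subgroup.centralizer (N : Set G) ≠ ⊥) :
    -- there is no compactly generated, topologically simple envelope of `G`
    ∀ (L : Type*) [Group L] [TopologicalSpace L] [IsTopologicalGroup L] [T2Space L]
      (η : G →* L), Continuous η → Function.Injective η → IsOpen (Set.range η) →
        Nontrivial L →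
        (∀ M : Subgroup L, M.Normal → IsClosed (M : Set L) → M = ⊥ ∨ M = ⊤) →
        ¬ ∃ K : Set L, IsCompact K ∧ Subgroup.closure K = ⊤ := by
  intro L _ _ _ _ η hη hinj hrange _ hsimple
  rintro ⟨K, hKc, hKgen⟩
  rcases finite_or_infinite ↥N with hNfin | hNinf
  · -- Case B : N is finite; use an element of N, whose centralizer is open
    obtain ⟨n₀, hn₀ne⟩ := Subgroup.ne_bot_iff_exists_ne_one.mp hNne
    -- the centralizer of n₀ in G is open
    have hCopen : IsOpen ((Subgroup.centralizer {(n₀ : G)} : Subgroup G) : Set G) := by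
      have hNsetfin : (N : Set G).Finite := Set.toFinite _
      have hfin2 : ((N : Set G) \ {(n₀ : G)}).Finite := hNsetfin.diff
      have hclosed2 : IsClosed ((N : Set G) \ {(n₀ : G)}) := hfin2.isClosed
      have hopenC : IsOpen (((N : Set G) \ {(n₀ : G)})ᶜ) := hclosed2.isOpen_compl
      have hcontf : Continuous (fun g : G => g * (n₀ : G) * g⁻¹) :=
        (continuous_id.mul continuous_const).mul continuous_inv
      have hseteq : ((Subgroup.centralizer {(n₀ : G)} : Subgroup G) : Set G)
          = (fun g : G => g * (n₀ : G) * g⁻¹) ⁻¹' (((N : Set G) \ {(n₀ : G)})ᶜ) := by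
        ext x
        simp only [SetLike.mem_coe, Set.mem_preimage, Set.mem_compl_iff, Set.mem_diff,
          Set.mem_singleton_iff, not_and, not_not]
        constructor
        · intro hx _
          have h1 : (n₀ : G) * x = x * (n₀ : G) :=
            Subgroup.mem_centralizer_iff.mp hx (n₀ : G) rfl
          calc x * (n₀ : G) * x⁻¹ = (x * (n₀ : G)) * x⁻¹ := by group
            _ = ((n₀ : G) * x) * x⁻¹ := by rw [h1]
            _ = (n₀ : G) := by group
        · intro hx
          have hmemN : x * (n₀ : G) * x⁻¹ ∈ N := hNnormal.conj_mem _ n₀.2 x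
          have heq : x * (n₀ : G) * x⁻¹ = (n₀ : G) := hx hmemN
          rw [Subgroup.mem_centralizer_iff]
          rintro m rfl
          calc (n₀ : G) * x = (x * (n₀ : G) * x⁻¹) * x := by rw [heq]
            _ = x * (n₀ : G) := by group
      rw [hseteq]
      exact hopenC.preimage hcontf
    haveI : Infinite ↥(⊤ : Subgroup G) :=
      Infinite.of_injective (fun g : G => (⟨g, trivial⟩ : ↥(⊤ : Subgroup G)))
        (fun a b hab => congrArg Subtype.val hab)
    have hn₀L : η (n₀ : G) ≠ 1 := by
      intro h1
      apply hn₀ne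
      have : (n₀ : G) = 1 := hinj (by rw [h1, map_one])
      exact Subtype.ext this
    refine main_aux η hη hinj hrange hsimple hKc hKgen ⊤ inferInstance
      (by rw [Subgroup.coe_top]; exact isClosed_univ) this (η (n₀ : G)) hn₀L ?_
    intro g
    -- the centralizer of g η(n₀) g⁻¹ is open
    have hηopenmap : IsOpenMap ⇑η := by
      have hoe : IsOpenEmbedding ⇑η := ⟨(hη.isClosedEmbedding hinj).toIsEmbedding, hrange⟩
      exact hoe.isOpenMap
    have hconjopen : IsOpen
        ((((Subgroup.centralizer {(n₀ : G)}).map η).map (MulAut.conj g).toMonoidHom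
          : Subgroup L) : Set L) := by
      rw [Subgroup.coe_map, Subgroup.coe_map]
      have hom : IsOpenMap ((fun x : L => x * g⁻¹) ∘ fun x : L => g * x) :=
        (Homeomorph.mulRight g⁻¹).isOpenMap.comp (Homeomorph.mulLeft g).isOpenMap
      exact hom _ (hηopenmap _ hCopen)
    have hle : ((Subgroup.centralizer {(n₀ : G)}).map η).map (MulAut.conj g).toMonoidHom
        ≤ Subgroup.centralizer {g * η (n₀ : G) * g⁻¹} := by
      rintro x hx
      obtain ⟨y, hy, rfl⟩ := Subgroup.mem_map.mp hx
      obtain ⟨b, hb, rfl⟩ := Subgroup.mem_map.mp hy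
      rw [Subgroup.mem_centralizer_iff]
      rintro m rfl
      have hcomm : η (n₀ : G) * η b = η b * η (n₀ : G) := by
        rw [← map_mul, ← map_mul]
        congr 1
        exact (Subgroup.mem_centralizer_iff.mp hb (n₀ : G) rfl)
      show (g * η (n₀ : G) * g⁻¹) * ((MulAut.conj g) (η b))
          = ((MulAut.conj g) (η b)) * (g * η (n₀ : G) * g⁻¹)
      rw [MulAut.conj_apply]
      calc (g * η (n₀ : G) * g⁻¹) * (g * η b * g⁻¹)
          = g * (η (n₀ : G) * η b) * g⁻¹ := by group
        _ = g * (η b * η (n₀ : G)) * g⁻¹ := by rw [hcomm]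
        _ = (g * η b * g⁻¹) * (g * η (n₀ : G) * g⁻¹) := by group
    have hBcomp : IsCompact (((⊤ : Subgroup G).map η : Subgroup L) : Set L) := by
      rw [Subgroup.coe_map, Subgroup.coe_top]
      exact IsCompact.image isCompact_univ hη
    exact aux_relIndex_ne_zero_of_isOpen (Subgroup.isOpen_mono hle hconjopen) hBcomp
  · -- Case A : N is infinite; use a nontrivial element of the centralizer of N
    obtain ⟨c₀, hc₀ne⟩ := Subgroup.ne_bot_iff_exists_ne_one.mp hcent
    have hc₀L : η (c₀ : G) ≠ 1 := by
      intro h1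
      apply hc₀ne
      have : (c₀ : G) = 1 := hinj (by rw [h1, map_one])
      exact Subtype.ext this
    refine main_aux η hη hinj hrange hsimple hKc hKgen N hNnormal hNclosed hNinf
      (η (c₀ : G)) hc₀L ?_
    intro g
    have hCOMM := aux_comm η hη hinj hrange N hsticky g
    have hle : (N.map η).map (MulAut.conj g).toMonoidHom
        ≤ Subgroup.centralizer {g * η (c₀ : G) * g⁻¹} := by
      rintro x hx
      obtain ⟨y, hy, rfl⟩ := Subgroup.mem_map.mp hx
      obtain ⟨n, hn, rfl⟩ := Subgroup.mem_map.mp hy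
      rw [Subgroup.mem_centralizer_iff]
      rintro m rfl
      have hcomm : η (c₀ : G) * η n = η n * η (c₀ : G) := by
        rw [← map_mul, ← map_mul]
        congr 1
        exact (Subgroup.mem_centralizer_iff.mp c₀.2 n hn).symm
      show (g * η (c₀ : G) * g⁻¹) * ((MulAut.conj g) (η n))
          = ((MulAut.conj g) (η n)) * (g * η (c₀ : G) * g⁻¹)
      rw [MulAut.conj_apply]
      calc (g * η (c₀ : G) * g⁻¹) * (g * η n * g⁻¹)
          = g * (η (c₀ : G) * η n) * g⁻¹ := by group
        _ = g * (η n * η (c₀ : G)) * g⁻¹ := by rw [hcomm]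
        _ = (g * η n * g⁻¹) * (g * η (c₀ : G) * g⁻¹) := by group
    intro h0
    exact hCOMM (zero_dvd_iff.mp (h0 ▸ Subgroup.relIndex_dvd_of_le_left (N.map η) hle))
end

section
/- Let G be a profinite group with trivial virtual center VZ(G) = {1}. Suppose R is a closed normal subgroup of G that is nilpotent (as an abstract group) and contains every nilpotent normal subgroup of G (i.e., R is the Fitting subgroup of G and is nilpotent). Then R is sticky in G: for every topological group isomorphism φ : U → V between open subgroups U, V of G, the subgroup φ(R ∩ U) ∩ R has finite index in both R and φ(R ∩ U). -/
open Subgroup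
open scoped commutatorElement

section Fitting

variable {G : Type*} [Group G]

/-- The set of `x` whose commutators with all of `C` land in the normal subgroup `M`. -/
private def relCent (C M : Subgroup G) (hM : M.Normal) : Subgroup G where
  carrier := {x | ∀ c ∈ C, ⁅x, c⁆ ∈ M}
  one_mem' := by intro c _; simpa using M.one_mem
  mul_mem' := by
    intro x y hx hy c hc
    have h1 : ⁅x * y, c⁆ = (x * ⁅y, c⁆ * x⁻¹) * ⁅x, c⁆ := by group
    rw [h1]
    exact M.mul_mem (hM.conj_mem _ (hy c hc) x) (hx c hc)
  inv_mem' := by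
    intro x hx c hc
    have h1 : ⁅x⁻¹, c⁆ = x⁻¹ * ⁅x, c⁆⁻¹ * x⁻¹⁻¹ := by group
    rw [h1]
    exact hM.conj_mem _ (M.inv_mem (hx c hc)) x⁻¹

private lemma commutator_le_relCent_iff {H C M : Subgroup G} (hM : M.Normal) :
    ⁅H, C⁆ ≤ M ↔ H ≤ relCent C M hM := by
  constructor
  · intro h x hx c hc
    exact h (commutator_mem_commutator hx hc)
  · intro h
    rw [commutator_le]
    intro g1 h1 g2 h2
    exact h h1 g2 h2

/-- The lower central series of a subgroup, as subgroups of the ambient group. -/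
private def gmm (N : Subgroup G) (n : ℕ) : Subgroup G :=
  ((⊤ : Subgroup N).lowerCentralSeries n).map N.subtype

private lemma gmm_zero (N : Subgroup G) : gmm N 0 = N := by
  rw [gmm, _root_.lowerCentralSeries_zero, ← MonoidHom.range_eq_map, Subgroup.range_subtype]

private lemma gmm_succ (N : Subgroup G) (n : ℕ) : gmm N (n + 1) = ⁅gmm N n, N⁆ := by
  show (⁅(⊤ : Subgroup N).lowerCentralSeries n, ⊤⁆ : Subgroup N).map N.subtype = _
  rw [Subgroup.map_commutator, gmm, ← MonoidHom.range_eq_map, Subgroup.range_subtype]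

private lemma gmm_normal (N : Subgroup G) (hN : N.Normal) (n : ℕ) : (gmm N n).Normal := by
  induction n with
  | zero => rw [gmm_zero]; exact hN
  | succ n ih => rw [gmm_succ]; exact @Subgroup.commutator_normal _ _ _ _ ih hN

private lemma gmm_antitone (N : Subgroup G) : Antitone (gmm N) := by
  intro m n h
  exact Subgroup.map_mono ((⊤ : Subgroup N).lowerCentralSeries_antitone h)

/-- Shifted series: `gA N 0 = ⊤`, `gA N (i+1) = gmm N i`. -/
private def gA (N : Subgroup G) : ℕ → Subgroup G
  | 0 => ⊤
  | (n + 1) => gmm N n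

private lemma gA_normal (N : Subgroup G) (hN : N.Normal) (n : ℕ) : (gA N n).Normal := by
  cases n with
  | zero =>
    show (⊤ : Subgroup G).Normal
    infer_instance
  | succ n => exact gmm_normal N hN n

private lemma comm_gA_le (N : Subgroup G) (hN : N.Normal) (i : ℕ) :
    ⁅gA N i, N⁆ ≤ gA N (i + 1) := by
  cases i with
  | zero =>
    show ⁅(⊤ : Subgroup G), N⁆ ≤ gmm N 0
    rw [gmm_zero]
    exact @Subgroup.commutator_le_right _ _ _ _ hN
  | succ i =>
    show ⁅gmm N i, N⁆ ≤ gmm N (i + 1)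
    rw [gmm_succ]

private lemma comm_gA_other (N : Subgroup G) (hN : N.Normal) (i : ℕ) (X : Subgroup G) :
    ⁅gA N i, X⁆ ≤ gA N i := by
  cases i with
  | zero => exact le_top
  | succ i =>
    haveI := gmm_normal N hN i
    show ⁅gmm N i, X⁆ ≤ gmm N i
    exact Subgroup.commutator_le_left _ _

private lemma gA_antitone (N : Subgroup G) : Antitone (gA N) := by
  apply antitone_nat_of_succ_le
  intro n
  cases n with
  | zero => exact le_top
  | succ n => exact gmm_antitone N (Nat.le_succ n)

private lemma normal_iSup {ι : Sort*} (f : ι → Subgroup G) (h : ∀ i, (f i).Normal) :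
    (⨆ i, f i).Normal := by
  constructor
  intro n hn g
  have h1 : (⨆ i, f i).map (MulAut.conj g).toMonoidHom ≤ ⨆ i, f i := by
    rw [Subgroup.map_iSup]
    refine iSup_le fun i => le_trans ?_ (le_iSup f i)
    rintro x ⟨y, hy, rfl⟩
    simpa using (h i).conj_mem y hy g
  have := h1 (Subgroup.mem_map_of_mem _ hn)
  simpa using this

/-- Fitting's theorem for two normal subgroups. -/
private theorem fitting2 (H K : Subgroup G) (hH : H.Normal) (hK : K.Normal)
    (h1 : Group.IsNilpotent H) (h2 : Group.IsNilpotent K) :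
    Group.IsNilpotent ↥(H ⊔ K) := by
  obtain ⟨c, hc⟩ := _root_.nilpotent_iff_lowerCentralSeries.mp h1
  obtain ⟨d, hd⟩ := _root_.nilpotent_iff_lowerCentralSeries.mp h2
  set T : ℕ → Subgroup G := fun n => ⨆ (i : ℕ) (j : ℕ) (_ : i + j = n), gA H i ⊓ gA K j with hT
  have hTnormal : ∀ n, (T n).Normal := by
    intro n
    refine normal_iSup _ fun i => normal_iSup _ fun j => normal_iSup _ fun hij => ?_
    haveI := gA_normal H hH i
    haveI := gA_normal K hK j
    infer_instance
  have hterm_le : ∀ i j n, i + j = n → gA H i ⊓ gA K j ≤ T n := by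
    intro i j n hij
    exact le_iSup_of_le i (le_iSup_of_le j (le_iSup_of_le hij le_rfl))
  have hSnormal : (H ⊔ K).Normal := Subgroup.sup_normal H K
  -- key step
  have step : ∀ n, ⁅T n, H ⊔ K⁆ ≤ T (n + 1) := by
    intro n
    have haux : ∀ L : Subgroup G, L.Normal →
        (∀ i j, i + j = n → ⁅gA H i ⊓ gA K j, L⁆ ≤ T (n + 1)) → ⁅T n, L⁆ ≤ T (n + 1) := by
      intro L hL hcomm
      rw [commutator_le_relCent_iff (hTnormal (n + 1))]
      refine iSup_le fun i => iSup_le fun j => iSup_le fun hij => ?_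
      rw [← commutator_le_relCent_iff (hTnormal (n + 1))]
      exact hcomm i j hij
    have hcommH : ⁅T n, H⁆ ≤ T (n + 1) := by
      refine haux H hH fun i j hij => ?_
      refine le_trans (le_inf ?_ ?_) (hterm_le (i + 1) j (n + 1) (by omega))
      · exact le_trans (commutator_mono inf_le_left le_rfl) (comm_gA_le H hH i)
      · exact le_trans (commutator_mono inf_le_right le_rfl) (comm_gA_other K hK j H)
    have hcommK : ⁅T n, K⁆ ≤ T (n + 1) := by
      refine haux K hK fun i j hij => ?_
      refine le_trans (le_inf ?_ ?_) (hterm_le i (j + 1) (n + 1) (by omega))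
      · exact le_trans (commutator_mono inf_le_left le_rfl) (comm_gA_other H hH i K)
      · exact le_trans (commutator_mono inf_le_right le_rfl) (comm_gA_le K hK j)
    rw [Subgroup.commutator_comm]
    rw [commutator_le_relCent_iff (hTnormal (n + 1))]
    refine sup_le ?_ ?_
    · rw [← commutator_le_relCent_iff (hTnormal (n + 1)), Subgroup.commutator_comm]
      exact hcommH
    · rw [← commutator_le_relCent_iff (hTnormal (n + 1)), Subgroup.commutator_comm]
      exact hcommK
  have main : ∀ n, gmm (H ⊔ K) n ≤ T (n + 1) := by
    intro n
    induction n with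
    | zero =>
      rw [gmm_zero]
      refine sup_le ?_ ?_
      · refine le_trans (le_inf ?_ le_top) (hterm_le 1 0 1 rfl)
        show H ≤ gA H 1
        rw [show gA H 1 = gmm H 0 from rfl, gmm_zero]
      · refine le_trans (le_inf le_top ?_) (hterm_le 0 1 1 rfl)
        show K ≤ gA K 1
        rw [show gA K 1 = gmm K 0 from rfl, gmm_zero]
    | succ n ih =>
      rw [gmm_succ]
      exact le_trans (commutator_mono ih le_rfl) (step (n + 1))
  -- conclusion
  have hbot : T (c + d + 2) = ⊥ := by
    rw [eq_bot_iff]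
    refine iSup_le fun i => iSup_le fun j => iSup_le fun hij => ?_
    have hHc : gmm H c = ⊥ := by rw [gmm, hc]; exact Subgroup.map_bot _
    have hKd : gmm K d = ⊥ := by rw [gmm, hd]; exact Subgroup.map_bot _
    rcases (by omega : c + 1 ≤ i ∨ d + 1 ≤ j) with h | h
    · exact le_trans inf_le_left (le_trans (gA_antitone H h) (le_of_eq hHc))
    · exact le_trans inf_le_right (le_trans (gA_antitone K h) (le_of_eq hKd))
  have hfin : gmm (H ⊔ K) (c + d + 1) = ⊥ := by
    rw [eq_bot_iff]
    exact le_trans (main (c + d + 1)) (le_of_eq hbot)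
  rw [_root_.nilpotent_iff_lowerCentralSeries]
  refine ⟨c + d + 1, ?_⟩
  exact (Subgroup.map_eq_bot_iff_of_injective _ (H ⊔ K).subtype_injective).mp hfin

end Fitting

section FittingFinite

variable {G : Type*} [Group G]

private theorem fittingFinite {ι : Type*} [Finite ι] (f : ι → Subgroup G)
    (hn : ∀ i, (f i).Normal) (hnil : ∀ i, Group.IsNilpotent ↥(f i)) :
    Group.IsNilpotent ↥(⨆ i, f i) := by
  classical
  cases nonempty_fintype ι
  have claim : ∀ s : Finset ι, (s.sup f).Normal ∧ Group.IsNilpotent ↥(s.sup f) := by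
    intro s
    induction s using Finset.induction_on with
    | empty =>
      constructor
      · rw [Finset.sup_empty]
        infer_instance
      · rw [Finset.sup_empty]
        infer_instance
    | insert a s hne ih =>
      rw [Finset.sup_insert]
      haveI h1 := hn a
      haveI h2 := ih.1
      exact ⟨Subgroup.sup_normal _ _, fitting2 _ _ h1 h2 (hnil a) ih.2⟩
  have heq : (⨆ i, f i) = Finset.univ.sup f := by
    rw [Finset.sup_eq_iSup]
    simp
  rw [heq]
  exact (claim Finset.univ).2

end FittingFinite

section CoreLemma

variable {G : Type*} [Group G] [TopologicalSpace G] [IsTopologicalGroup G] [CompactSpace G]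

/-- Core lemma: a nilpotent subgroup normalized by an open subgroup has an open
normal "co-finite-index witness" inside the Fitting subgroup. -/
private theorem core_lemma (R : Subgroup G)
    (hRmax : ∀ S : Subgroup G, S.Normal → Group.IsNilpotent S → S ≤ R)
    (V : Subgroup G) (hVopen : IsOpen (V : Set G))
    (N : Subgroup G) (hNnil : Group.IsNilpotent N)
    (hnorm : ∀ v ∈ V, ∀ n ∈ N, v * n * v⁻¹ ∈ N) :
    ∃ K : Subgroup G, IsOpen (K : Set G) ∧ N ⊓ K ≤ R := by
  have hclopen : IsClopen (V : Set G) := ⟨V.isClosed_of_isOpen hVopen, hVopen⟩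
  obtain ⟨Kn, hKn⟩ :=
    IsTopologicalGroup.exist_openNormalSubgroup_sub_clopen_nhds_of_one hclopen V.one_mem
  set K : Subgroup G := Kn.toSubgroup with hK
  have hKopen : IsOpen (K : Set G) := Kn.toOpenSubgroup.isOpen
  haveI hKnormal : K.Normal := Kn.isNormal'
  have hKV : K ≤ V := fun x hx => hKn hx
  set A : Subgroup G := N ⊓ K with hA
  have hAK : A ≤ K := inf_le_right
  have hAconj : ∀ k ∈ K, ∀ a ∈ A, k * a * k⁻¹ ∈ A := by
    intro k hk a ha
    exact ⟨hnorm k (hKV hk) a ha.1, hKnormal.conj_mem a ha.2 k⟩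
  set cm : G → Subgroup G := fun g => A.map (MulAut.conj g).toMonoidHom with hcm
  have hcomp : ∀ g h : G,
      ((MulAut.conj g).toMonoidHom.comp (MulAut.conj h).toMonoidHom : G →* G)
        = (MulAut.conj (g * h)).toMonoidHom := by
    intro g h
    ext z
    simp [mul_assoc]
  have hmapmap : ∀ g h : G, (cm h).map (MulAut.conj g).toMonoidHom = cm (g * h) := by
    intro g h
    rw [hcm]
    rw [Subgroup.map_map, hcomp]
  have hconjA : ∀ k ∈ K, cm k = A := by
    intro k hk
    apply le_antisymm
    · rintro x ⟨a, ha, rfl⟩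
      simpa using hAconj k hk a ha
    · intro a ha
      refine ⟨k⁻¹ * a * k, ?_, by simp [mul_assoc]⟩
      simpa using hAconj k⁻¹ (K.inv_mem hk) a ha
  have hcm_coset : ∀ g k, k ∈ K → cm (g * k) = cm g := by
    intro g k hk
    rw [← hmapmap g k, hconjA k hk]
  haveI : Finite (G ⧸ K) := Subgroup.quotient_finite_of_isOpen K hKopen
  set M : Subgroup G := ⨆ g : G, cm g with hM
  have hMnormal : M.Normal := by
    constructor
    intro n hn g
    have h1 : M.map (MulAut.conj g).toMonoidHom ≤ M := by
      rw [hM, Subgroup.map_iSup]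
      refine iSup_le fun x => ?_
      rw [hmapmap g x]
      exact le_iSup cm (g * x)
    have := h1 (Subgroup.mem_map_of_mem _ hn)
    simpa using this
  have hMeq : M = ⨆ q : G ⧸ K, cm (Quotient.out q) := by
    apply le_antisymm
    · refine iSup_le fun g => ?_
      obtain ⟨k, hk⟩ := QuotientGroup.mk_out_eq_mul K g
      have : cm (Quotient.out (QuotientGroup.mk g : G ⧸ K)) = cm g := by
        rw [hk]
        exact hcm_coset g k k.2
      rw [← this]
      exact le_iSup (fun q : G ⧸ K => cm (Quotient.out q)) (QuotientGroup.mk g : G ⧸ K)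
    · exact iSup_le fun q => le_iSup cm (Quotient.out q)
  have hcm_le_K : ∀ g, cm g ≤ K := by
    rintro g x ⟨a, ha, rfl⟩
    simpa using hKnormal.conj_mem a (hAK ha) g
  set B : (G ⧸ K) → Subgroup K := fun q => (cm (Quotient.out q)).subgroupOf K with hB
  have hcm_conj : ∀ g, ∀ k ∈ K, ∀ x ∈ cm g, k * x * k⁻¹ ∈ cm g := by
    rintro g k hk x ⟨a, ha, rfl⟩
    have hkg : g⁻¹ * k * g ∈ K := by
      simpa using hKnormal.conj_mem k hk g⁻¹
    refine ⟨(g⁻¹ * k * g) * a * (g⁻¹ * k * g)⁻¹, hAconj _ hkg a ha, ?_⟩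
    simp only [MulEquiv.coe_toMonoidHom, MulAut.conj_apply]
    group
  have hBnormal : ∀ q, (B q).Normal := by
    intro q
    constructor
    intro n hn k
    rw [Subgroup.mem_subgroupOf] at hn ⊢
    have : ((k * n * k⁻¹ : K) : G) = (k : G) * (n : G) * (k : G)⁻¹ := by push_cast; ring_nf
    rw [this]
    exact hcm_conj _ (k : G) k.2 (n : G) hn
  have hAnil : Group.IsNilpotent ↥A := by
    haveI : Group.IsNilpotent ↥N := hNnil
    have e : ↥((N ⊓ K).subgroupOf N) ≃* ↥(N ⊓ K) := Subgroup.subgroupOfEquivOfLe inf_le_left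
    exact nilpotent_of_mulEquiv e
  have hBnil : ∀ q, Group.IsNilpotent ↥(B q) := by
    intro q
    have e1 : ↥(B q) ≃* ↥(cm (Quotient.out q)) := Subgroup.subgroupOfEquivOfLe (hcm_le_K _)
    have e2 : ↥A ≃* ↥(cm (Quotient.out q)) :=
      A.equivMapOfInjective _ (MulAut.conj (Quotient.out q)).injective
    haveI := hAnil
    exact nilpotent_of_mulEquiv (e2.trans e1.symm)
  haveI hsupB : Group.IsNilpotent ↥(⨆ q, B q) := fittingFinite B hBnormal hBnil
  have hmapB : (⨆ q, B q).map K.subtype = M := by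
    rw [Subgroup.map_iSup, hMeq]
    refine le_antisymm (iSup_le fun q => ?_) (iSup_le fun q => ?_)
    · rw [hB]
      rw [Subgroup.subgroupOf_map_subtype]
      exact le_trans inf_le_left (le_iSup (fun q : G ⧸ K => cm (Quotient.out q)) q)
    · refine le_trans ?_ (le_iSup (fun q : G ⧸ K => ((B q).map K.subtype)) q)
      rw [hB, Subgroup.subgroupOf_map_subtype]
      exact le_inf le_rfl (hcm_le_K _)
  have hMnil : Group.IsNilpotent ↥M := by
    have e1 : ↥(⨆ q, B q) ≃* ↥((⨆ q, B q).map K.subtype) :=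
      (⨆ q, B q).equivMapOfInjective K.subtype K.subtype_injective
    have e2 : ↥((⨆ q, B q).map K.subtype) ≃* ↥M := MulEquiv.subgroupCongr hmapB
    exact nilpotent_of_mulEquiv (e1.trans e2)
  have hMR : M ≤ R := hRmax M hMnormal hMnil
  have hAM : A ≤ M := by
    have : cm 1 = A := by
      rw [hcm]
      convert Subgroup.map_id A using 2
      ext z
      simp
    rw [← this]
    exact le_iSup cm 1
  exact ⟨K, hKopen, le_trans hAM hMR⟩

end CoreLemma

section Main

variable {G : Type*} [Group G]

private lemma conj_mem_aux {U V : Subgroup G} (ψ : ↥U ≃* ↥V) (R : Subgroup G) (hR : R.Normal) :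
    ∀ v ∈ V, ∀ n ∈ ((R.subgroupOf U).map ψ.toMonoidHom).map V.subtype,
      v * n * v⁻¹ ∈ ((R.subgroupOf U).map ψ.toMonoidHom).map V.subtype := by
  intro v hv n hn
  obtain ⟨y, hy, rfl⟩ := hn
  obtain ⟨x, hx, rfl⟩ := hy
  set v' : ↥V := ⟨v, hv⟩ with hv'
  set u : ↥U := ψ.symm v' with hu
  refine ⟨v' * ψ x * v'⁻¹, ⟨u * x * u⁻¹, ?_, ?_⟩, ?_⟩
  · have hx2 : (x : G) ∈ R := hx
    show ((u * x * u⁻¹ : ↥U) : G) ∈ R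
    have hcoe : ((u * x * u⁻¹ : ↥U) : G) = (u : G) * (x : G) * (u : G)⁻¹ := by
      simp
    rw [hcoe]
    exact hR.conj_mem _ hx2 _
  · rw [map_mul, map_mul, map_inv, hu]
    simp
  · simp [hv']

private lemma nil_aux {U V : Subgroup G} (ψ : ↥U ≃* ↥V) (R : Subgroup G)
    (hRnilp : Group.IsNilpotent ↥R) :
    Group.IsNilpotent ↥(((R.subgroupOf U).map ψ.toMonoidHom).map V.subtype) := by
  haveI := hRnilp
  have hinf : Group.IsNilpotent ↥(R ⊓ U) := by
    have e : ↥((R ⊓ U).subgroupOf R) ≃* ↥(R ⊓ U) := Subgroup.subgroupOfEquivOfLe inf_le_left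
    exact nilpotent_of_mulEquiv e
  have e1 : ↥(R.subgroupOf U) ≃* ↥(R ⊓ U) :=
    ((R.subgroupOf U).equivMapOfInjective U.subtype U.subtype_injective).trans
      (MulEquiv.subgroupCongr (Subgroup.subgroupOf_map_subtype R U))
  haveI h1 : Group.IsNilpotent ↥(R.subgroupOf U) := nilpotent_of_mulEquiv e1.symm
  have e2 : ↥(R.subgroupOf U) ≃* ↥((R.subgroupOf U).map ψ.toMonoidHom) :=
    (R.subgroupOf U).equivMapOfInjective ψ.toMonoidHom ψ.injective
  have e3 : ↥((R.subgroupOf U).map ψ.toMonoidHom) ≃*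
      ↥(((R.subgroupOf U).map ψ.toMonoidHom).map V.subtype) :=
    ((R.subgroupOf U).map ψ.toMonoidHom).equivMapOfInjective V.subtype V.subtype_injective
  exact nilpotent_of_mulEquiv (e2.trans e3)

variable [TopologicalSpace G] [IsTopologicalGroup G] [CompactSpace G] [T2Space G]

private lemma compact_aux {U V : Subgroup G} (hU : IsOpen (U : Set G)) (ψ : ↥U ≃* ↥V)
    (hψ : Continuous ψ) {R : Subgroup G} (hR : IsClosed (R : Set G)) :
    IsCompact ((((R.subgroupOf U).map ψ.toMonoidHom).map V.subtype : Subgroup G) : Set G) := by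
  have hUc : IsCompact (U : Set G) := (U.isClosed_of_isOpen hU).isCompact
  haveI : CompactSpace ↥U := isCompact_iff_compactSpace.mp hUc
  have h1 : IsClosed ((R.subgroupOf U : Subgroup ↥U) : Set ↥U) := by
    rw [Subgroup.coe_subgroupOf]
    exact hR.preimage continuous_subtype_val
  have h2 : IsCompact ((R.subgroupOf U : Subgroup ↥U) : Set ↥U) := h1.isCompact
  have h3 : IsCompact (⇑ψ '' ((R.subgroupOf U : Subgroup ↥U) : Set ↥U)) := h2.image hψ
  have h4 : IsCompact (Subtype.val '' (⇑ψ '' ((R.subgroupOf U : Subgroup ↥U) : Set ↥U))) :=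
    h3.image continuous_subtype_val
  have heq : ((((R.subgroupOf U).map ψ.toMonoidHom).map V.subtype : Subgroup G) : Set G)
      = Subtype.val '' (⇑ψ '' ((R.subgroupOf U : Subgroup ↥U) : Set ↥U)) := by
    rw [Subgroup.coe_map, Subgroup.coe_map]
    rfl
  rw [heq]
  exact h4

private lemma open_aux {U V : Subgroup G} (hU : IsOpen (U : Set G)) (hV : IsOpen (V : Set G))
    (ψ : ↥U ≃* ↥V) (hψs : Continuous ψ.symm) {K : Subgroup G} (hK : IsOpen (K : Set G)) :
    IsOpen ((((K.subgroupOf U).map ψ.toMonoidHom).map V.subtype : Subgroup G) : Set G) := by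
  have h1 : IsOpen ((K.subgroupOf U : Subgroup ↥U) : Set ↥U) := by
    rw [Subgroup.coe_subgroupOf]
    exact hK.preimage continuous_subtype_val
  have h2 : IsOpen (⇑ψ '' ((K.subgroupOf U : Subgroup ↥U) : Set ↥U)) := by
    have : ⇑ψ '' ((K.subgroupOf U : Subgroup ↥U) : Set ↥U)
        = ⇑ψ.symm ⁻¹' ((K.subgroupOf U : Subgroup ↥U) : Set ↥U) := by
      ext z
      constructor
      · rintro ⟨w, hw, rfl⟩
        simpa using hw
      · intro hz
        exact ⟨ψ.symm z, hz, by simp⟩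
    rw [this]
    exact h1.preimage hψs
  have h3 : IsOpenMap (Subtype.val : ↥V → G) := by
    have := hV.isOpenMap_subtype_val
    exact this
  have heq : ((((K.subgroupOf U).map ψ.toMonoidHom).map V.subtype : Subgroup G) : Set G)
      = Subtype.val '' (⇑ψ '' ((K.subgroupOf U : Subgroup ↥U) : Set ↥U)) := by
    rw [Subgroup.coe_map, Subgroup.coe_map]
    rfl
  rw [heq]
  exact h3 _ h2

end Main

/-- Proposition 4.7: If `G` is a profinite group with trivial virtual center whose Fitting
subgroup `R` is nilpotent (i.e. `R` is a closed normal nilpotent subgroup containing every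
nilpotent normal subgroup of `G`), then `R` is sticky in `G`. -/
theorem stmt_9 {G : Type*} [Group G] [TopologicalSpace G] [IsTopologicalGroup G]
    [CompactSpace G] [T2Space G] [TotallyDisconnectedSpace G]
    (hVZ : ∀ g : G, IsOpen ((Subgroup.centralizer {g} : Subgroup G) : Set G) → g = 1)
    (R : Subgroup G) (hRnormal : R.Normal) (hRclosed : IsClosed (R : Set G))
    (hRnilp : Group.IsNilpotent R)
    (hRmax : ∀ S : Subgroup G, S.Normal → Group.IsNilpotent S → S ≤ R) :
    -- stickiness: for every topological isomorphism `φ : U → V` between open subgroups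
    -- of `G`, the subgroup `φ(R ∩ U) ∩ R` has finite index in both `R` and `φ(R ∩ U)`
    ∀ (U V : Subgroup G), IsOpen (U : Set G) → IsOpen (V : Set G) →
      ∀ φ : U ≃* V, Continuous φ → Continuous φ.symm →
        (((R.subgroupOf U).map φ.toMonoidHom).map V.subtype).relIndex R ≠ 0 ∧
        R.relIndex (((R.subgroupOf U).map φ.toMonoidHom).map V.subtype) ≠ 0 := by
  intro U V hU hV φ hφc hφsc
  set N : Subgroup G := ((R.subgroupOf U).map φ.toMonoidHom).map V.subtype with hNdef
  haveI : CompactSpace ↥R := isCompact_iff_compactSpace.mp hRclosed.isCompact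
  constructor
  · -- `N ⊓ R` has finite index in `R`
    set N' : Subgroup G := ((R.subgroupOf V).map φ.symm.toMonoidHom).map U.subtype with hN'def
    have hN'nil : Group.IsNilpotent ↥N' := nil_aux φ.symm R hRnilp
    have hN'norm := conj_mem_aux φ.symm R hRnormal
    obtain ⟨K', hK'open, hK'le⟩ := core_lemma R hRmax U hU N' hN'nil hN'norm
    set K₂ : Subgroup G := ((K'.subgroupOf U).map φ.toMonoidHom).map V.subtype with hK₂def
    have hK₂open : IsOpen (K₂ : Set G) := open_aux hU hV φ hφsc hK'open
    have key : K₂ ⊓ R ≤ N := by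
      rintro r ⟨hrK₂, hrR⟩
      obtain ⟨y, hy, rfl⟩ := hrK₂
      obtain ⟨x, hx, rfl⟩ := hy
      have hxN' : (x : G) ∈ N' := by
        refine ⟨x, ⟨φ x, ?_, ?_⟩, rfl⟩
        · exact hrR
        · exact φ.symm_apply_apply x
      have hxK' : (x : G) ∈ K' := hx
      have hxR : (x : G) ∈ R := hK'le ⟨hxN', hxK'⟩
      exact ⟨φ x, ⟨x, hxR, rfl⟩, rfl⟩
    have hK₂R : K₂.relIndex R ≠ 0 := by
      have hopen : IsOpen ((K₂.subgroupOf R : Subgroup ↥R) : Set ↥R) := by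
        rw [Subgroup.coe_subgroupOf]
        exact hK₂open.preimage continuous_subtype_val
      haveI : Finite (↥R ⧸ (K₂.subgroupOf R)) :=
        Subgroup.quotient_finite_of_isOpen _ hopen
      exact Subgroup.index_ne_zero_of_finite
    have heq : (K₂ ⊓ N).relIndex R = K₂.relIndex R := by
      rw [← Subgroup.inf_relIndex_right (K₂ ⊓ N) R, ← Subgroup.inf_relIndex_right K₂ R]
      congr 1
      apply le_antisymm
      · exact inf_le_inf_right R inf_le_left
      · exact le_inf (le_inf inf_le_left key) inf_le_right
    exact mt (Subgroup.relIndex_eq_zero_of_le_left (inf_le_right : K₂ ⊓ N ≤ N))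
      (heq ▸ hK₂R)
  · -- `R ⊓ N` has finite index in `N`
    have hNnil : Group.IsNilpotent ↥N := nil_aux φ R hRnilp
    have hNnorm := conj_mem_aux φ R hRnormal
    obtain ⟨K, hKopen, hKle⟩ := core_lemma R hRmax V hV N hNnil hNnorm
    have hNcompact : IsCompact (N : Set G) := compact_aux hU φ hφc hRclosed
    haveI : CompactSpace ↥N := isCompact_iff_compactSpace.mp hNcompact
    have hKN : K.relIndex N ≠ 0 := by
      have hopen : IsOpen ((K.subgroupOf N : Subgroup ↥N) : Set ↥N) := by
        rw [Subgroup.coe_subgroupOf]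
        exact hKopen.preimage continuous_subtype_val
      haveI : Finite (↥N ⧸ (K.subgroupOf N)) :=
        Subgroup.quotient_finite_of_isOpen _ hopen
      exact Subgroup.index_ne_zero_of_finite
    have heq : (K ⊓ R).relIndex N = K.relIndex N := by
      rw [← Subgroup.inf_relIndex_right (K ⊓ R) N, ← Subgroup.inf_relIndex_right K N]
      congr 1
      apply le_antisymm
      · exact inf_le_inf_right N inf_le_left
      · exact le_inf (le_inf inf_le_left (fun x hx => hKle ⟨hx.2, hx.1⟩)) inf_le_right
    exact mt (Subgroup.relIndex_eq_zero_of_le_left (inf_le_right : K ⊓ R ≤ R))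
      (heq ▸ hKN)
end

section
/- Let G be a profinite group with trivial virtual center VZ(G) = {1}. Suppose that G contains a nontrivial closed normal subgroup R that is nilpotent (as an abstract group) and contains every nilpotent normal subgroup of G (i.e., the Fitting subgroup of G is nilpotent and nontrivial). Then G has no compactly generated, topologically simple envelope: there is no Hausdorff topological group L that is topologically simple and compactly generated, together with an injective continuous group homomorphism η : G → L whose range is open in L. -/
open Subgroup
open scoped commutatorElement

namespace Stmt10Aux

variable {Γ : Type*} [Group Γ]

/-- conjugate of a subgroup -/
def conjSub (g : Γ) (S : Subgroup Γ) : Subgroup Γ := S.map (MulAut.conj g).toMonoidHom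

lemma mem_conjSub {g y : Γ} {S : Subgroup Γ} : y ∈ conjSub g S ↔ g⁻¹ * y * g ∈ S := by
  constructor
  · rintro ⟨x, hx, rfl⟩
    simpa [MulAut.conj_apply, mul_assoc] using hx
  · intro h
    exact ⟨g⁻¹ * y * g, h, by simp [MulAut.conj_apply, mul_assoc]⟩

lemma mem_conjSub' {g x : Γ} {S : Subgroup Γ} (hx : x ∈ S) : g * x * g⁻¹ ∈ conjSub g S := by
  rw [mem_conjSub]; simpa [mul_assoc]

lemma conjSub_conjSub (g h : Γ) (S : Subgroup Γ) :
    conjSub g (conjSub h S) = conjSub (g * h) S := by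
  ext y
  simp only [mem_conjSub]
  have he : (g * h)⁻¹ * y * (g * h) = h⁻¹ * (g⁻¹ * y * g) * h := by group
  rw [he]

lemma conjSub_one (S : Subgroup Γ) : conjSub 1 S = S := by
  ext y; simp [mem_conjSub]

lemma conjSub_mono {S T : Subgroup Γ} (g : Γ) (h : S ≤ T) : conjSub g S ≤ conjSub g T := by
  intro y hy; rw [mem_conjSub] at *; exact h hy

lemma conjSub_of_mem_normalizer {g : Γ} {S : Subgroup Γ} (hg : g ∈ normalizer (S : Set Γ)) :
    conjSub g S = S := by
  ext y
  rw [mem_conjSub]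
  rw [Subgroup.mem_normalizer_iff] at hg
  have := hg (g⁻¹ * y * g)
  have he : g * (g⁻¹ * y * g) * g⁻¹ = y := by group
  rw [he] at this
  exact this

lemma conjSub_of_normal {g : Γ} {S : Subgroup Γ} (hS : S.Normal) : conjSub g S = S :=
  conjSub_of_mem_normalizer (by rw [Subgroup.normalizer_eq_top_iff.mpr hS]; trivial)

lemma le_normalizer_of_conj_mem {X Y : Subgroup Γ}
    (h : ∀ y ∈ Y, ∀ x ∈ X, y * x * y⁻¹ ∈ X) : Y ≤ normalizer (X : Set Γ) := by
  intro y hy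
  rw [Subgroup.mem_normalizer_iff]
  intro x
  constructor
  · intro hx; exact h y hy x hx
  · intro hx
    have := h y⁻¹ (inv_mem hy) _ hx
    simpa [mul_assoc] using this

lemma iSup_normal {ι : Sort*} (S : ι → Subgroup Γ) (h : ∀ i, (S i).Normal) :
    (⨆ i, S i).Normal := by
  constructor
  intro n hn g
  refine Subgroup.iSup_induction S (C := fun n => g * n * g⁻¹ ∈ ⨆ i, S i) hn ?_ ?_ ?_
  · intro i x hx
    exact Subgroup.mem_iSup_of_mem i ((h i).conj_mem x hx g)
  · simpa using one_mem _
  · intro x y hx hy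
    have hxy : g * (x * y) * g⁻¹ = (g * x * g⁻¹) * (g * y * g⁻¹) := by group
    rw [hxy]; exact mul_mem hx hy

lemma commutator_iSup_le_left {ι : Sort*} (A : ι → Subgroup Γ) (B X : Subgroup Γ)
    (hX : X.Normal) (h : ∀ i, ⁅A i, B⁆ ≤ X) : ⁅⨆ i, A i, B⁆ ≤ X := by
  rw [Subgroup.commutator_le]
  intro g hg b hb
  revert b
  refine Subgroup.iSup_induction A (C := fun g => ∀ b ∈ B, ⁅g, b⁆ ∈ X) hg ?_ ?_ ?_
  · intro i x hx b hb
    exact (Subgroup.commutator_le.mp (h i)) x hx b hb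
  · intro b hb; simpa [commutatorElement_def] using one_mem X
  · intro x y hx hy b hb
    have hid : ⁅x * y, b⁆ = x * ⁅y, b⁆ * x⁻¹ * ⁅x, b⁆ := by
      simp only [commutatorElement_def]; group
    rw [hid]
    exact mul_mem (hX.conj_mem _ (hy b hb) x) (hx b hb)

lemma commutator_iSup_le_right {ι : Sort*} (A : Subgroup Γ) (B : ι → Subgroup Γ) (X : Subgroup Γ)
    (hX : X.Normal) (h : ∀ i, ⁅A, B i⁆ ≤ X) : ⁅A, ⨆ i, B i⁆ ≤ X := by
  rw [Subgroup.commutator_le]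
  intro g hg b hb
  refine Subgroup.iSup_induction B (C := fun b => ⁅g, b⁆ ∈ X) hb ?_ ?_ ?_
  · intro i x hx
    exact (Subgroup.commutator_le.mp (h i)) g hg x hx
  · simpa [commutatorElement_def] using one_mem X
  · intro x y hx hy
    have hid : ⁅g, x * y⁆ = ⁅g, x⁆ * (x * ⁅g, y⁆ * x⁻¹) := by
      simp only [commutatorElement_def]; group
    rw [hid]
    exact mul_mem hx (hX.conj_mem _ hy x)




lemma normal_biInf {ι : Type*} (s : Finset ι) (K : ι → Subgroup Γ)
    (h : ∀ i, (K i).Normal) : (⨅ i ∈ s, K i).Normal := by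
  constructor
  intro n hn g
  simp only [Subgroup.mem_iInf] at hn ⊢
  intro i hi
  exact (h i).conj_mem _ (hn i hi) g

lemma ladder {ι : Type*} [Finite ι] (K : ι → Subgroup Γ)
    (hn : ∀ i, (K i).Normal) (hab : ∀ i, ∀ x ∈ K i, ∀ y ∈ K i, x * y = y * x) :
    Group.IsNilpotent ↥(⨆ i, K i) := by
  classical
  cases nonempty_fintype ι
  set J : Subgroup Γ := ⨆ i, K i with hJ
  set M : ℕ → Subgroup Γ := fun j => ⨆ s : {s : Finset ι // s.card = j}, ⨅ i ∈ s.1, K i with hM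
  have hMnormal : ∀ j, (M j).Normal := fun j =>
    iSup_normal _ (fun s => normal_biInf s.1 K hn)
  have hM1 : M 1 = J := by
    apply le_antisymm
    · apply iSup_le
      rintro ⟨s, hs⟩
      obtain ⟨a, rfl⟩ := Finset.card_eq_one.mp hs
      have he : (⨅ i ∈ ({a} : Finset ι), K i) = K a := by simp
      rw [he]
      exact le_iSup K a
    · apply iSup_le
      intro i
      have he : (⨅ j ∈ ({i} : Finset ι), K j) = K i := by simp
      calc K i = ⨅ j ∈ ({i} : Finset ι), K j := he.symm
        _ ≤ M 1 := le_iSup (fun s : {s : Finset ι // s.card = 1} => ⨅ i ∈ s.1, K i)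
            ⟨{i}, Finset.card_singleton i⟩
  have hstep : ∀ j, ⁅M j, J⁆ ≤ M (j + 1) := by
    intro j
    apply commutator_iSup_le_left _ _ _ (hMnormal (j+1))
    rintro ⟨s, hs⟩
    apply commutator_iSup_le_right _ _ _ (hMnormal (j+1))
    intro t
    by_cases ht : t ∈ s
    · rw [Subgroup.commutator_le]
      intro x hx y hy
      simp only [Subgroup.mem_iInf] at hx
      have hxt : x ∈ K t := hx t ht
      have : ⁅x, y⁆ = 1 := by
        rw [commutatorElement_def, mul_inv_eq_one, mul_inv_eq_iff_eq_mul]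
        exact (hab t x hxt y hy).symm ▸ (hab t x hxt y hy)
      rw [this]; exact one_mem _
    · have h1 : ⁅⨅ i ∈ s, K i, K t⁆ ≤ (⨅ i ∈ s, K i) ⊓ K t := by
        haveI := normal_biInf s K hn
        haveI := hn t
        exact le_inf (Subgroup.commutator_le_left _ _) (Subgroup.commutator_le_right _ _)
      have h2 : (⨅ i ∈ s, K i) ⊓ K t = ⨅ i ∈ insert t s, K i := by
        rw [Finset.iInf_insert, inf_comm]
      have h3 : (⨅ i ∈ insert t s, K i) ≤ M (j + 1) :=
        le_iSup (fun s : {s : Finset ι // s.card = j + 1} => ⨅ i ∈ s.1, K i)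
          ⟨insert t s, by rw [Finset.card_insert_of_notMem ht, hs]⟩
      exact h1.trans (h2.le.trans h3)
  set k := Fintype.card ι with hk
  have hMtop : M (k + 1) = ⊥ := by
    haveI : IsEmpty {s : Finset ι // s.card = k + 1} := by
      constructor
      rintro ⟨s, hs⟩
      have := Finset.card_le_univ s
      omega
    exact iSup_of_empty _
  -- ambient descending series
  have hD : ∀ n : ℕ, Subgroup.map J.subtype ((⊤ : Subgroup ↥J).lowerCentralSeries n) ≤ M (n + 1) := by
    intro n
    induction n with
    | zero =>
      have : Subgroup.map J.subtype ((⊤ : Subgroup ↥J).lowerCentralSeries 0) = J := by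
        simp [Subgroup.lowerCentralSeries_zero, ← MonoidHom.range_eq_map, Subgroup.range_subtype]
      rw [this, hM1]
    | succ n ih =>
      have hrfl : (⊤ : Subgroup ↥J).lowerCentralSeries (n + 1) = ⁅(⊤ : Subgroup ↥J).lowerCentralSeries n, ⊤⁆ := rfl
      have hmaptop : Subgroup.map J.subtype ⊤ = J := by
        rw [← MonoidHom.range_eq_map, Subgroup.range_subtype]
      rw [hrfl, Subgroup.map_commutator, hmaptop]
      calc ⁅Subgroup.map J.subtype ((⊤ : Subgroup ↥J).lowerCentralSeries n), J⁆
          ≤ ⁅M (n + 1), J⁆ := Subgroup.commutator_mono ih le_rfl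
        _ ≤ M (n + 2) := hstep (n + 1)
  rw [_root_.nilpotent_iff_lowerCentralSeries]
  refine ⟨k, ?_⟩
  have hb : Subgroup.map J.subtype ((⊤ : Subgroup ↥J).lowerCentralSeries k) = ⊥ :=
    le_bot_iff.mp (hMtop ▸ hD k)
  exact (Subgroup.map_eq_bot_iff_of_injective (H := (⊤ : Subgroup ↥J).lowerCentralSeries k) (f := J.subtype) (Subgroup.subtype_injective J)).mp hb


lemma conjSub_le_of_le {S T : Subgroup Γ} {g : Γ} (hST : S ≤ T) (hT : T.Normal) :
    conjSub g S ≤ T := by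
  rw [← conjSub_of_normal (g := g) hT]
  exact conjSub_mono g hST

/-- Fitting-style argument: an abelian subgroup `T` contained in and normalized by an
open (finite-index) normal subgroup `H` is contained in `R`. -/
lemma fit {G : Type*} [Group G] (R : Subgroup G)
    (hRmax : ∀ S : Subgroup G, S.Normal → Group.IsNilpotent S → S ≤ R)
    (T H : Subgroup G) (hHn : H.Normal) [H.FiniteIndex]
    (hTH : T ≤ H) (hnorm : H ≤ normalizer (T : Set G))
    (hab : ∀ x ∈ T, ∀ y ∈ T, x * y = y * x) : T ≤ R := by
  classical
  haveI : Finite (G ⧸ H) := Subgroup.finite_quotient_of_finiteIndex (H := H)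
  set f : G ⧸ H → Subgroup G := fun q => conjSub q.out T with hf
  have hkey : ∀ g : G, conjSub g T = f (QuotientGroup.mk g) := by
    intro g
    have h1 : (QuotientGroup.mk g : G ⧸ H) = QuotientGroup.mk (QuotientGroup.mk g : G ⧸ H).out :=
      (Quotient.out_eq _).symm
    have h2 : g⁻¹ * (QuotientGroup.mk g : G ⧸ H).out ∈ H := QuotientGroup.eq.mp h1
    have h3 : (QuotientGroup.mk g : G ⧸ H).out = g * (g⁻¹ * (QuotientGroup.mk g : G ⧸ H).out) := by
      group
    rw [hf]
    simp only []
    rw [h3, ← conjSub_conjSub, conjSub_of_mem_normalizer (hnorm h2)]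
  set N : Subgroup G := ⨆ q, f q with hN
  have hTN : T ≤ N := by
    have : T = f (QuotientGroup.mk 1) := by rw [← hkey, conjSub_one]
    rw [this]; exact le_iSup f _
  have hfH : ∀ q, f q ≤ H := fun q => conjSub_le_of_le hTH hHn
  have hfconj : ∀ (g : G) (q : G ⧸ H), conjSub g (f q) = f (QuotientGroup.mk (g * q.out)) := by
    intro g q
    rw [hf]; simp only []
    rw [conjSub_conjSub, hkey]
  have hNnormal : N.Normal := by
    constructor
    intro n hn g
    have h1 : g * n * g⁻¹ ∈ conjSub g N := mem_conjSub' hn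
    have h2 : conjSub g N ≤ N := by
      show Subgroup.map _ _ ≤ N
      rw [hN, Subgroup.map_iSup]
      apply iSup_le
      intro q
      rw [show Subgroup.map (MulAut.conj g).toMonoidHom (f q) = conjSub g (f q) from rfl, hfconj]
      exact le_iSup f _
    exact h2 h1
  -- conjugation by elements of H fixes each f q
  have hHfix : ∀ q, ∀ h ∈ H, conjSub h (f q) = f q := by
    intro q h hh
    rw [hf]; simp only []
    rw [conjSub_conjSub]
    have : h * q.out = q.out * (q.out⁻¹ * h * q.out) := by group
    rw [this, ← conjSub_conjSub]
    have hmem : q.out⁻¹ * h * q.out ∈ H := by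
      have := hHn.conj_mem h hh q.out⁻¹
      simpa using this
    rw [conjSub_of_mem_normalizer (hnorm hmem)]
  -- pass to subgroups of H
  set K' : G ⧸ H → Subgroup ↥H := fun q => (f q).subgroupOf H with hK'
  have hK'normal : ∀ q, (K' q).Normal := by
    intro q
    constructor
    rintro ⟨n, hnH⟩ hn ⟨h, hh⟩
    rw [hK'] at hn ⊢
    simp only [Subgroup.mem_subgroupOf] at hn ⊢
    have : h * n * h⁻¹ ∈ conjSub h (f q) := mem_conjSub' hn
    rwa [hHfix q h hh] at this
  have hK'ab : ∀ q, ∀ x ∈ K' q, ∀ y ∈ K' q, x * y = y * x := by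
    rintro q ⟨x, hxH⟩ hx ⟨y, hyH⟩ hy
    rw [hK'] at hx hy
    simp only [Subgroup.mem_subgroupOf] at hx hy
    rcases hx with ⟨a, ha, rfl⟩
    rcases hy with ⟨b, hb, rfl⟩
    have : (MulAut.conj q.out).toMonoidHom a * (MulAut.conj q.out).toMonoidHom b
        = (MulAut.conj q.out).toMonoidHom b * (MulAut.conj q.out).toMonoidHom a := by
      rw [← map_mul, ← map_mul, hab a ha b hb]
    exact Subtype.ext this
  have hnilp : Group.IsNilpotent ↥(⨆ q, K' q) := ladder K' hK'normal hK'ab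
  have hmap : Subgroup.map H.subtype (⨆ q, K' q) = N := by
    rw [Subgroup.map_iSup, hN]
    congr 1
    funext q
    rw [hK']
    simp only []
    rw [Subgroup.subgroupOf_map_subtype, inf_eq_left.mpr (hfH q)]
  have hNnilp : Group.IsNilpotent ↥N := by
    let e := Subgroup.equivMapOfInjective (⨆ q, K' q) H.subtype (Subgroup.subtype_injective H)
    rw [hmap] at e
    exact nilpotent_of_surjective e.toMonoidHom (MulEquiv.surjective e)
  exact le_trans hTN (hRmax N hNnormal hNnilp)


lemma center_ne_bot' {Γ : Type*} [Group Γ] [hnil : Group.IsNilpotent Γ] [Nontrivial Γ] :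
    Subgroup.center Γ ≠ ⊥ := by
  intro h
  have hucs : ∀ n, Subgroup.upperCentralSeries Γ n = ⊥ := by
    intro n
    induction n with
    | zero => exact Subgroup.upperCentralSeries_zero Γ
    | succ n ih =>
      rw [eq_bot_iff]
      intro x hx
      have hc : x ∈ Subgroup.center Γ := by
        rw [Subgroup.mem_center_iff]
        intro g
        have hmem := Subgroup.mem_upperCentralSeries_succ_iff.mp hx g
        rw [ih] at hmem
        have h1 : x * g * x⁻¹ * g⁻¹ = 1 := by simpa [commutatorElement_def] using hmem
        have h2 : x * g = g * x := by
          have := mul_eq_one_iff_eq_inv.mp h1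
          calc x * g = (x * g * x⁻¹ * g⁻¹) * (g * x) := by group
            _ = g * x := by rw [h1]; group
        exact h2.symm
      rw [h] at hc
      exact hc
  obtain ⟨n, hn⟩ := hnil.nilpotent'
  rw [hucs n] at hn
  obtain ⟨x, hx⟩ := exists_ne (1 : Γ)
  exact hx (Subgroup.mem_bot.mp (hn ▸ Subgroup.mem_top x))

lemma finite_normal_eq_bot {G : Type*} [Group G] [TopologicalSpace G] [IsTopologicalGroup G]
    [CompactSpace G] [T2Space G]
    (hVZ : ∀ g : G, IsOpen ((Subgroup.centralizer {g} : Subgroup G) : Set G) → g = 1)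
    (N : Subgroup G) (hN : N.Normal) (hfin : (N : Set G).Finite) : N = ⊥ := by
  rw [eq_bot_iff]
  intro n hn
  have horb : (MulAction.orbit (ConjAct G) n) ⊆ (N : Set G) := by
    rintro x ⟨g, rfl⟩
    show g • n ∈ (N : Set G)
    rw [ConjAct.smul_def]
    exact hN.conj_mem n hn (ConjAct.ofConjAct g)
  haveI : Finite (MulAction.orbit (ConjAct G) n) := (hfin.subset horb).to_subtype
  haveI : Finite (ConjAct G ⧸ MulAction.stabilizer (ConjAct G) n) :=
    Finite.of_equiv _ (MulAction.orbitEquivQuotientStabilizer (ConjAct G) n)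
  haveI : (MulAction.stabilizer (ConjAct G) n).FiniteIndex :=
    Subgroup.finiteIndex_of_finite_quotient
  haveI hfi : (Subgroup.centralizer ({n} : Set G)).FiniteIndex := by
    constructor
    have hidx := Subgroup.index_comap_of_surjective (MulAction.stabilizer (ConjAct G) n)
      (f := (ConjAct.toConjAct : G ≃* ConjAct G).toMonoidHom) (MulEquiv.surjective _)
    rw [Subgroup.centralizer_eq_comap_stabilizer]
    convert (Subgroup.FiniteIndex.index_ne_zero (H := MulAction.stabilizer (ConjAct G) n)) using 1
    exact hidx
  have hclosed : IsClosed ((Subgroup.centralizer ({n} : Set G) : Subgroup G) : Set G) := by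
    have he : ((Subgroup.centralizer ({n} : Set G) : Subgroup G) : Set G)
        = {z : G | n * z = z * n} := by
      ext z
      simp [Subgroup.mem_centralizer_iff]
    rw [he]
    exact isClosed_eq (continuous_const.mul continuous_id) (continuous_id.mul continuous_const)
  have hopen := Subgroup.isOpen_of_isClosed_of_finiteIndex _ hclosed
  exact Subgroup.mem_bot.mpr (hVZ n hopen)

end Stmt10Aux

open Stmt10Aux Subgroup Topology Pointwise

set_option maxHeartbeats 1000000 in
/-- Corollary 4.8: A profinite group with trivial virtual center whose Fitting subgroup is
nilpotent and nontrivial has no compactly generated, topologically simple envelope. -/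
theorem stmt_10 {G : Type*} [Group G] [TopologicalSpace G] [IsTopologicalGroup G]
    [CompactSpace G] [T2Space G] [TotallyDisconnectedSpace G]
    (hVZ : ∀ g : G, IsOpen ((Subgroup.centralizer {g} : Subgroup G) : Set G) → g = 1)
    (R : Subgroup G) (hRne : R ≠ ⊥) (hRnormal : R.Normal)
    (hRclosed : IsClosed (R : Set G)) (hRnilp : Group.IsNilpotent R)
    (hRmax : ∀ S : Subgroup G, S.Normal → Group.IsNilpotent S → S ≤ R) :
    ∀ (L : Type*) [Group L] [TopologicalSpace L] [IsTopologicalGroup L] [T2Space L]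
      (η : G →* L), Continuous η → Function.Injective η → IsOpen (Set.range η) →
        Nontrivial L →
        (∀ M : Subgroup L, M.Normal → IsClosed (M : Set L) → M = ⊥ ∨ M = ⊤) →
        ¬ ∃ K : Set L, IsCompact K ∧ Subgroup.closure K = ⊤ := by
  intro L _ _ _ _ η hcont hinj hrange hLnt hsimple
  rintro ⟨K, hKcomp, hKgen⟩
  classical
  -- topological basics about the embedding η
  have hce : IsClosedEmbedding η := hcont.isClosedEmbedding hinj
  have hemb : IsOpenEmbedding η := ⟨hce.toIsEmbedding, hrange⟩
  have hopenmap : IsOpenMap η := hemb.isOpenMap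
  set U : Subgroup L := η.range with hU
  have hUopen : IsOpen (U : Set L) := by simpa [hU, MonoidHom.coe_range] using hrange
  have hUcompact : IsCompact (U : Set L) := by
    simpa [hU, MonoidHom.coe_range] using isCompact_range hcont
  have hUclosed : IsClosed (U : Set L) := hUcompact.isClosed
  have himgopen : ∀ V : Subgroup G, IsOpen (V : Set G) →
      IsOpen ((V.map η : Subgroup L) : Set L) := by
    intro V hV; rw [Subgroup.coe_map]; exact hopenmap _ hV
  have himgclosed : ∀ V : Subgroup G, IsClosed (V : Set G) →
      IsClosed ((V.map η : Subgroup L) : Set L) := by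
    intro V hV; rw [Subgroup.coe_map]; exact ((hV.isCompact).image hcont).isClosed
  have hconjset : ∀ (m : L) (S : Subgroup L), ((conjSub m S : Subgroup L) : Set L) =
      ((Homeomorph.mulLeft m).trans (Homeomorph.mulRight m⁻¹)) '' (S : Set L) := by
    intro m S
    rw [show (conjSub m S : Subgroup L) = S.map (MulAut.conj m).toMonoidHom from rfl,
      Subgroup.coe_map]
    apply Set.image_congr'
    intro x
    simp [MulAut.conj_apply, mul_assoc]
  have hconjopen : ∀ (m : L) (S : Subgroup L), IsOpen (S : Set L) →
      IsOpen ((conjSub m S : Subgroup L) : Set L) := by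
    intro m S hS
    rw [hconjset m S]
    exact (Homeomorph.isOpen_image _).mpr hS
  have hconjclosed : ∀ (m : L) (S : Subgroup L), IsClosed (S : Set L) →
      IsClosed ((conjSub m S : Subgroup L) : Set L) := by
    intro m S hS
    rw [hconjset m S]
    exact (Homeomorph.isClosed_image _).mpr hS
  -- the subgroup A = center of R, as a subgroup of G
  haveI hRnt : Nontrivial ↥R := (Subgroup.nontrivial_iff_ne_bot R).mpr hRne
  haveI := hRnilp
  have hZne : Subgroup.center ↥R ≠ ⊥ := center_ne_bot'
  set A : Subgroup G := (Subgroup.center ↥R).map R.subtype with hA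
  have hAle : A ≤ R := Subgroup.map_subtype_le _
  have hAR : ∀ a ∈ A, ∀ r ∈ R, a * r = r * a := by
    rintro _ ⟨z, hz, rfl⟩ r hr
    have h1 := Subgroup.mem_center_iff.mp hz ⟨r, hr⟩
    have h2 := congrArg (Subtype.val) h1
    exact h2.symm
  have hAmem : ∀ x, (x ∈ R ∧ ∀ r ∈ R, x * r = r * x) → x ∈ A := by
    rintro x ⟨hxR, hc⟩
    refine ⟨⟨x, hxR⟩, Subgroup.mem_center_iff.mpr ?_, rfl⟩
    rintro ⟨g, hg⟩
    exact Subtype.ext (hc g hg).symm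
  have hAnormal : A.Normal := by
    constructor
    intro a ha g
    apply hAmem
    refine ⟨hRnormal.conj_mem a (hAle ha) g, ?_⟩
    intro r hr
    have h1 : g⁻¹ * r * g ∈ R := by
      have := hRnormal.conj_mem r hr g⁻¹
      simpa using this
    have h2 := hAR a ha _ h1
    calc g * a * g⁻¹ * r = g * (a * (g⁻¹ * r * g)) * g⁻¹ := by group
      _ = g * ((g⁻¹ * r * g) * a) * g⁻¹ := by rw [h2]
      _ = r * (g * a * g⁻¹) := by group
  have hAbot : A ≠ ⊥ := by
    intro h
    exact hZne ((Subgroup.map_eq_bot_iff_of_injective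
      (H := Subgroup.center ↥R) (f := R.subtype) (Subgroup.subtype_injective R)).mp h)
  have hAclosed : IsClosed (A : Set G) := by
    have he : (A : Set G) = (R : Set G) ∩ ⋂ r : ↥R, {x : G | x * r = r * x} := by
      ext x
      simp only [Set.mem_inter_iff, Set.mem_iInter, Set.mem_setOf_eq, SetLike.mem_coe]
      constructor
      · intro hx
        exact ⟨hAle hx, fun r => hAR x hx r r.2⟩
      · rintro ⟨h1, h2⟩
        exact hAmem x ⟨h1, fun r hr => h2 ⟨r, hr⟩⟩
    rw [he]
    exact hRclosed.inter (isClosed_iInter fun r =>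
      isClosed_eq (continuous_id.mul continuous_const) (continuous_const.mul continuous_id))
  have hAinf : ¬ (A : Set G).Finite := by
    intro h
    exact hAbot (finite_normal_eq_bot hVZ A hAnormal h)
  -- images in L
  set P : Subgroup L := A.map η with hP
  set Q : Subgroup L := R.map η with hQ
  have hPbot : P ≠ ⊥ := by
    intro h
    exact hAbot ((Subgroup.map_eq_bot_iff_of_injective (H := A) (f := η) hinj).mp h)
  have hPab : ∀ p ∈ P, ∀ p' ∈ P, p * p' = p' * p := by
    rintro _ ⟨a, ha, rfl⟩ _ ⟨b, hb, rfl⟩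
    rw [← map_mul, ← map_mul, hAR a ha b (hAle hb)]
  have hPQcomm : ∀ p ∈ P, ∀ q ∈ Q, p * q = q * p := by
    rintro _ ⟨a, ha, rfl⟩ _ ⟨r, hr, rfl⟩
    rw [← map_mul, ← map_mul, hAR a ha r hr]
  have hUnormP : ∀ u ∈ U, ∀ p ∈ P, u * p * u⁻¹ ∈ P := by
    rintro _ ⟨g, rfl⟩ _ ⟨a, ha, rfl⟩
    refine ⟨g * a * g⁻¹, hAnormal.conj_mem a ha g, by rw [map_mul, map_mul, map_inv]⟩
  -- the key claim
  have key : ∀ l : L, ∃ V : Subgroup G, IsOpen (V : Set G) ∧ IsClosed (V : Set G) ∧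
      ∀ a ∈ A, a ∈ V → η a ∈ conjSub l Q := by
    intro l
    set m : L := l⁻¹ with hm
    set X : Subgroup L := conjSub m P ⊓ (U ⊓ conjSub m U) with hX
    set S : Subgroup G := X.comap η with hS
    have hSmem : ∀ x : G, x ∈ S ↔ η x ∈ X := fun x => Iff.rfl
    have hSab : ∀ x ∈ S, ∀ y ∈ S, x * y = y * x := by
      intro x hx y hy
      have hx' : m⁻¹ * η x * m ∈ P := mem_conjSub.mp ((hSmem x).mp hx).1
      have hy' : m⁻¹ * η y * m ∈ P := mem_conjSub.mp ((hSmem y).mp hy).1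
      have hc := hPab _ hx' _ hy'
      have e1 : (m⁻¹ * η x * m) * (m⁻¹ * η y * m) = m⁻¹ * (η x * η y) * m := by group
      have e2 : (m⁻¹ * η y * m) * (m⁻¹ * η x * m) = m⁻¹ * (η y * η x) * m := by group
      rw [e1, e2] at hc
      have h2 : η x * η y = η y * η x := mul_left_cancel (mul_right_cancel hc)
      exact hinj (by rw [map_mul, map_mul, h2])
    set H0 : Subgroup G := (U ⊓ conjSub m U).comap η with hH0
    have hH0open : IsOpen (H0 : Set G) := by
      rw [hH0, Subgroup.coe_comap, Subgroup.coe_inf]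
      exact (hUopen.inter (hconjopen m U hUopen)).preimage hcont
    have hH0closed : IsClosed (H0 : Set G) := by
      rw [hH0, Subgroup.coe_comap, Subgroup.coe_inf]
      exact (hUclosed.inter (hconjclosed m U hUclosed)).preimage hcont
    haveI := Subgroup.quotient_finite_of_isOpen H0 hH0open
    haveI : H0.FiniteIndex := Subgroup.finiteIndex_of_finite_quotient
    set H : Subgroup G := H0.normalCore with hH
    haveI hHfi : H.FiniteIndex := Subgroup.finiteIndex_normalCore H0
    have hHnormal : H.Normal := Subgroup.normalCore_normal H0
    have hHclosed : IsClosed (H : Set G) := Subgroup.normalCore_isClosed H0 hH0closed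
    have hHopen : IsOpen (H : Set G) := Subgroup.isOpen_of_isClosed_of_finiteIndex H hHclosed
    -- conjugation by elements of H0 preserves S
    have hH0S : ∀ h ∈ H0, ∀ x ∈ S, h * x * h⁻¹ ∈ S := by
      intro h hh x hx
      have hh2 : η h ∈ U ⊓ conjSub m U := hh
      rw [Subgroup.mem_inf] at hh2
      obtain ⟨hhU, hhC⟩ := hh2
      have hx' := (hSmem x).mp hx
      rw [hX, Subgroup.mem_inf, Subgroup.mem_inf] at hx'
      obtain ⟨hx1, hx2, hx3⟩ := hx'
      rw [hSmem, hX, Subgroup.mem_inf, Subgroup.mem_inf]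
      have hη : η (h * x * h⁻¹) = η h * η x * (η h)⁻¹ := by rw [map_mul, map_mul, map_inv]
      rw [hη]
      have hhU' : m⁻¹ * η h * m ∈ U := mem_conjSub.mp hhC
      have hxP : m⁻¹ * η x * m ∈ P := mem_conjSub.mp hx1
      have hxU : m⁻¹ * η x * m ∈ U := mem_conjSub.mp hx3
      refine ⟨?_, ?_, ?_⟩
      · rw [mem_conjSub]
        have e : m⁻¹ * (η h * η x * (η h)⁻¹) * m
            = (m⁻¹ * η h * m) * ((m⁻¹ * η x * m) * (m⁻¹ * η h * m)⁻¹) := by group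
        rw [e]
        have := hUnormP _ hhU' _ hxP
        have e2 : m⁻¹ * η h * m * (m⁻¹ * η x * m) * (m⁻¹ * η h * m)⁻¹
            = (m⁻¹ * η h * m) * ((m⁻¹ * η x * m) * (m⁻¹ * η h * m)⁻¹) := by group
        rw [e2] at this
        exact this
      · exact mul_mem (mul_mem hhU hx2) (inv_mem hhU)
      · rw [mem_conjSub]
        have e : m⁻¹ * (η h * η x * (η h)⁻¹) * m
            = (m⁻¹ * η h * m) * (m⁻¹ * η x * m) * (m⁻¹ * η h * m)⁻¹ := by group
        rw [e]
        exact mul_mem (mul_mem hhU' hxU) (inv_mem hhU')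
    have hT : S ⊓ H ≤ R := by
      refine fit R hRmax (S ⊓ H) H hHnormal inf_le_right ?_ ?_
      · apply le_normalizer_of_conj_mem
        intro h hh x hx
        exact ⟨hH0S h (H0.normalCore_le hh) x hx.1, hHnormal.conj_mem _ hx.2 h⟩
      · intro x hx y hy
        exact hSab x hx.1 y hy.1
    set Y : Subgroup L := U ⊓ (Subgroup.map η H) with hY
    set V : Subgroup G := (conjSub m⁻¹ Y).comap η with hV
    have hYopen : IsOpen (Y : Set L) := by
      rw [hY, Subgroup.coe_inf]
      exact hUopen.inter (himgopen H hHopen)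
    have hYclosed : IsClosed (Y : Set L) := by
      rw [hY, Subgroup.coe_inf]
      exact hUclosed.inter (himgclosed H hHclosed)
    refine ⟨V, ?_, ?_, ?_⟩
    · rw [hV, Subgroup.coe_comap]
      exact (hconjopen m⁻¹ Y hYopen).preimage hcont
    · rw [hV, Subgroup.coe_comap]
      exact (hconjclosed m⁻¹ Y hYclosed).preimage hcont
    · intro a haA haV
      have h1 : η a ∈ conjSub m⁻¹ Y := haV
      have h2 : m * η a * m⁻¹ ∈ Y := by
        rw [mem_conjSub] at h1
        simpa using h1
      obtain ⟨hyU, hyH⟩ := h2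
      obtain ⟨s, hs⟩ := hyU
      obtain ⟨h', hh', hh'e⟩ := hyH
      have hsh : s = h' := hinj (by rw [hs, hh'e])
      have hsS : s ∈ S := by
        rw [hSmem, hX, Subgroup.mem_inf, Subgroup.mem_inf, hs]
        refine ⟨?_, ⟨s, hs⟩, ?_⟩
        · rw [mem_conjSub]
          have e : m⁻¹ * (m * η a * m⁻¹) * m = η a := by group
          rw [e]
          exact ⟨a, haA, rfl⟩
        · rw [mem_conjSub]
          have e : m⁻¹ * (m * η a * m⁻¹) * m = η a := by group
          rw [e]
          exact ⟨a, rfl⟩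
      have hsR : s ∈ R := hT ⟨hsS, hsh ▸ hh'⟩
      rw [mem_conjSub]
      have e : l⁻¹ * η a * l = m * η a * m⁻¹ := by rw [hm]; group
      rw [e, ← hs]
      exact ⟨s, hsR, rfl⟩
  -- the dense normal subgroup generated by all conjugates of P
  set D1 : Subgroup L := ⨆ l : L, conjSub l P with hD1
  have hD1normal : D1.Normal := by
    constructor
    intro n hn g
    have h2 : conjSub g D1 ≤ D1 := by
      show Subgroup.map _ _ ≤ D1
      rw [hD1, Subgroup.map_iSup]
      apply iSup_le
      intro l
      rw [show Subgroup.map (MulAut.conj g).toMonoidHom (conjSub l P)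
        = conjSub g (conjSub l P) from rfl, conjSub_conjSub]
      exact le_iSup (fun l : L => conjSub l P) (g * l)
    exact h2 (mem_conjSub' hn)
  have hPD1 : P ≤ D1 := by
    have h1 := le_iSup (fun l : L => conjSub l P) 1
    rw [conjSub_one] at h1
    rw [hD1]
    exact h1
  have hD1ne : D1 ≠ ⊥ := by
    intro h
    exact hPbot (le_bot_iff.mp (h ▸ hPD1))
  haveI := hD1normal
  have hD1dense : Dense (D1 : Set L) := by
    rcases hsimple D1.topologicalClosure (Subgroup.is_normal_topologicalClosure D1)
      (Subgroup.isClosed_topologicalClosure D1) with h | h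
    · exact absurd (le_bot_iff.mp (h ▸ D1.le_topologicalClosure)) hD1ne
    · have hc := congrArg (fun (S : Subgroup L) => (S : Set L)) h
      simp only [Subgroup.topologicalClosure_coe, Subgroup.coe_top] at hc
      rw [dense_iff_closure_eq]
      exact hc
  -- cover K by cosets of U with representatives in D1
  have hcover : ∀ x : L, ∃ d : ↥D1, x ∈ (d : L) • (U : Set L) := by
    intro x
    have hne : (x • (U : Set L)).Nonempty := ⟨x, by
      rw [Set.mem_smul_set_iff_inv_smul_mem, smul_eq_mul, inv_mul_cancel]
      exact U.one_mem⟩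
    obtain ⟨d, hd1, hd2⟩ := hD1dense.inter_open_nonempty _ (hUopen.smul x) hne
    refine ⟨⟨d, hd2⟩, ?_⟩
    rw [Set.mem_smul_set_iff_inv_smul_mem, smul_eq_mul] at hd1 ⊢
    have he : (d : L)⁻¹ * x = (x⁻¹ * d)⁻¹ := by group
    rw [he]
    exact inv_mem hd1
  obtain ⟨t, ht⟩ := hKcomp.elim_finite_subcover (fun d : ↥D1 => (d : L) • (U : Set L))
    (fun d => hUopen.smul _) (fun k hk => Set.mem_iUnion.mpr (hcover k))
  -- finite decomposition of the conjugators
  set FF : Finset L → Subgroup L := fun E => ⨆ l ∈ E, conjSub l P with hFF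
  have hFFmono : ∀ {E E' : Finset L}, E ⊆ E' → FF E ≤ FF E' := by
    intro E E' hEE'
    exact iSup_le fun l => iSup_le fun hl =>
      le_iSup_of_le l (le_iSup_of_le (hEE' hl) le_rfl)
  have hdir : Directed (· ≤ ·) FF := fun E E' =>
    ⟨E ∪ E', hFFmono Finset.subset_union_left, hFFmono Finset.subset_union_right⟩
  have hD1FF : ∀ d : L, d ∈ D1 → ∃ E : Finset L, d ∈ FF E := by
    intro d hd
    have he : D1 = ⨆ E : Finset L, FF E := by
      apply le_antisymm
      · apply iSup_le
        intro l
        refine le_trans ?_ (le_iSup FF {l})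
        rw [hFF]
        exact le_iSup_of_le l (le_iSup_of_le (Finset.mem_singleton_self l) le_rfl)
      · apply iSup_le
        intro E
        exact iSup_le fun l => iSup_le fun _ => le_iSup (fun l : L => conjSub l P) l
    rw [he] at hd
    exact (Subgroup.mem_iSup_of_directed hdir).mp hd
  choose Efun hEfun using fun d : ↥D1 => hD1FF d d.2
  set E : Finset L := t.sup Efun with hE
  have hdE : ∀ d ∈ t, (d : L) ∈ FF E := fun d hd => hFFmono (Finset.le_sup hd) (hEfun d)
  -- the open normal subgroup W of G
  choose Vfun hVopen hVclosed hVprop using key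
  set Vinf : Subgroup G := ⨅ l ∈ E, Vfun l with hVinf
  have hVinfset : (Vinf : Set G) = ⋂ l ∈ E, (Vfun l : Set G) := by
    rw [hVinf]
    simp [Subgroup.coe_iInf]
  have hVinfopen : IsOpen (Vinf : Set G) := by
    rw [hVinfset]
    exact (E.finite_toSet).isOpen_biInter (fun l _ => hVopen l)
  have hVinfclosed : IsClosed (Vinf : Set G) := by
    rw [hVinfset]
    exact isClosed_biInter (fun l _ => hVclosed l)
  haveI := Subgroup.quotient_finite_of_isOpen Vinf hVinfopen
  haveI : Vinf.FiniteIndex := Subgroup.finiteIndex_of_finite_quotient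
  set W : Subgroup G := Vinf.normalCore with hW
  haveI hWfi : W.FiniteIndex := Subgroup.finiteIndex_normalCore Vinf
  have hWnormal : W.Normal := Subgroup.normalCore_normal Vinf
  have hWclosed : IsClosed (W : Set G) := Subgroup.normalCore_isClosed Vinf hVinfclosed
  have hWleV : ∀ l ∈ E, W ≤ Vfun l := by
    intro l hl
    refine le_trans (Subgroup.normalCore_le Vinf) ?_
    rw [hVinf]
    exact iInf_le_of_le l (iInf_le_of_le hl le_rfl)
  -- the closed normal subgroup P0
  set P0 : Subgroup L := (A ⊓ W).map η with hP0
  have hP0closed : IsClosed (P0 : Set L) := by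
    apply himgclosed
    rw [Subgroup.coe_inf]
    exact hAclosed.inter hWclosed
  have hP0ne : P0 ≠ ⊥ := by
    intro h
    have hAW : A ⊓ W = ⊥ :=
      (Subgroup.map_eq_bot_iff_of_injective (H := A ⊓ W) (f := η) hinj).mp h
    haveI : (W.subgroupOf A).FiniteIndex := Subgroup.instFiniteIndex_subgroupOf W A
    have hWA : W.subgroupOf A = ⊥ := by
      rw [eq_bot_iff]
      rintro x hx
      have hmem : (x : G) ∈ A ⊓ W := ⟨x.2, (Subgroup.mem_subgroupOf).mp hx⟩
      rw [hAW, Subgroup.mem_bot] at hmem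
      exact Subgroup.mem_bot.mpr (Subtype.ext hmem)
    have hidx : Nat.card ↥A ≠ 0 := by
      have h1 := (Subgroup.FiniteIndex.index_ne_zero : (W.subgroupOf A).index ≠ 0)
      rwa [hWA, Subgroup.index_bot] at h1
    haveI : Finite ↥A := Nat.finite_of_card_ne_zero hidx
    exact hAinf (Set.toFinite _)
  -- P0 is normal since the generators of L normalize it
  have hgen2 : U ⊔ FF E = ⊤ := by
    rw [eq_top_iff, ← hKgen]
    rw [Subgroup.closure_le]
    intro k hk
    obtain ⟨d, hd⟩ := Set.mem_iUnion.mp (ht hk)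
    obtain ⟨hdt, hkd⟩ := Set.mem_iUnion.mp hd
    rw [Set.mem_smul_set_iff_inv_smul_mem, smul_eq_mul] at hkd
    have hd2 : (d : L) ∈ U ⊔ FF E := (le_sup_right : FF E ≤ U ⊔ FF E) (hdE d hdt)
    have hu2 : (d : L)⁻¹ * k ∈ U ⊔ FF E := (le_sup_left : U ≤ U ⊔ FF E) hkd
    have he : k = (d : L) * ((d : L)⁻¹ * k) := by group
    rw [SetLike.mem_coe, he]
    exact mul_mem hd2 hu2
  have hnormalizer : normalizer (P0 : Set L) = ⊤ := by
    rw [eq_top_iff, ← hgen2]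
    apply sup_le
    · apply le_normalizer_of_conj_mem
      rintro y ⟨g, rfl⟩ x hx
      rcases hx with ⟨b, hb, rfl⟩
      refine ⟨g * b * g⁻¹, ⟨hAnormal.conj_mem _ hb.1 g, hWnormal.conj_mem _ hb.2 g⟩, ?_⟩
      rw [map_mul, map_mul, map_inv]
    · apply iSup_le
      intro l
      apply iSup_le
      intro hl
      apply le_normalizer_of_conj_mem
      intro z hz x hx
      rcases hx with ⟨b, hb, rfl⟩
      have hbV : b ∈ Vfun l := hWleV l hl hb.2
      have hxQ : η b ∈ conjSub l Q := hVprop l b hb.1 hbV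
      have hzP : l⁻¹ * z * l ∈ P := mem_conjSub.mp hz
      have hxq : l⁻¹ * η b * l ∈ Q := mem_conjSub.mp hxQ
      have hcomm := hPQcomm _ hzP _ hxq
      have e1 : (l⁻¹ * z * l) * (l⁻¹ * η b * l) = l⁻¹ * (z * η b) * l := by group
      have e2 : (l⁻¹ * η b * l) * (l⁻¹ * z * l) = l⁻¹ * (η b * z) * l := by group
      rw [e1, e2] at hcomm
      have h2 : z * η b = η b * z := mul_left_cancel (mul_right_cancel hcomm)
      have he : z * η b * z⁻¹ = η b := by rw [h2]; group
      rw [he]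
      exact ⟨b, hb, rfl⟩
  have hP0normal : P0.Normal := Subgroup.normalizer_eq_top_iff.mp hnormalizer
  rcases hsimple P0 hP0normal hP0closed with h | h
  · exact hP0ne h
  · -- if P0 = ⊤ then G is abelian, contradicting hVZ and R ≠ ⊥
    have hAW : A ⊓ W = ⊤ := by
      have hc := congrArg (Subgroup.comap η) h
      rwa [Subgroup.comap_map_eq_self_of_injective hinj, Subgroup.comap_top] at hc
    have hAtop : A = ⊤ := by
      rw [eq_top_iff, ← hAW]
      exact inf_le_left
    have hRtop : R = ⊤ := by
      rw [eq_top_iff, ← hAtop]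
      exact hAle
    have hall : ∀ g : G, g = 1 := by
      intro g
      apply hVZ g
      have hc : (Subgroup.centralizer ({g} : Set G) : Subgroup G) = ⊤ := by
        rw [eq_top_iff]
        intro x _
        rw [Subgroup.mem_centralizer_iff]
        intro y hy
        rw [Set.mem_singleton_iff] at hy
        subst hy
        exact hAR y (hAtop ▸ Subgroup.mem_top y) x (hRtop ▸ Subgroup.mem_top x)
      rw [hc, Subgroup.coe_top]
      exact isOpen_univ
    apply hRne
    rw [eq_bot_iff]
    intro r _
    exact Subgroup.mem_bot.mpr (hall r)
end

section
/- Let L be a topological group with trivial virtual center VZ(L) = {1}, and let G be an open compact subgroup of L that is a just-infinite profinite group. Then every nontrivial closed normal subgroup N of L is open in L. -/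
/-- Proposition 5.3: Let `L` be a topological group with trivial virtual center containing
an open compact subgroup `G` which is a just-infinite profinite group. Then every
nontrivial closed normal subgroup of `L` is open. -/
theorem stmt_13 {L : Type*} [Group L] [TopologicalSpace L] [IsTopologicalGroup L]
    (hVZ : ∀ g : L, IsOpen ((Subgroup.centralizer {g} : Subgroup L) : Set L) → g = 1)
    (G : Subgroup L) (hGopen : IsOpen (G : Set L)) (hGcompact : IsCompact (G : Set L))
    (hGt2 : T2Space G) (hGtd : TotallyDisconnectedSpace G) (hGinf : Infinite G)
    -- `G` is just-infinite: every nontrivial closed normal subgroup of `G` is open in `G`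
    (hji : ∀ N : Subgroup G, N.Normal → IsClosed (N : Set G) → N ≠ ⊥ →
      IsOpen (N : Set G))
    (N : Subgroup L) (hN : N.Normal) (hNclosed : IsClosed (N : Set L)) (hNne : N ≠ ⊥) :
    IsOpen (N : Set L) := by
  set M : Subgroup G := N.comap G.subtype with hM
  by_cases hMbot : M = ⊥
  · -- N ∩ G is trivial; show any n ∈ N is central on an open set, contradiction
    exfalso
    obtain ⟨n, hnN, hn1⟩ : ∃ n ∈ N, n ≠ 1 := by
      by_contra h
      push_neg at h
      exact hNne (Subgroup.eq_bot_iff_forall N |>.2 h)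
    apply hn1
    apply hVZ
    -- the commutator map
    have hcont : Continuous fun g : L => g * n * g⁻¹ * n⁻¹ := by continuity
    have hU : IsOpen ((fun g : L => g * n * g⁻¹ * n⁻¹) ⁻¹' (G : Set L)) :=
      hGopen.preimage hcont
    have h1U : (1 : L) ∈ (fun g : L => g * n * g⁻¹ * n⁻¹) ⁻¹' (G : Set L) := by
      simp [hnN, G.one_mem]
    apply Subgroup.isOpen_of_mem_nhds
    refine Filter.mem_of_superset (hU.mem_nhds h1U) ?_
    intro g hg
    have hcN : g * n * g⁻¹ * n⁻¹ ∈ N :=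
      N.mul_mem (hN.conj_mem n hnN g) (N.inv_mem hnN)
    -- so the commutator lies in N ∩ G = ⊥
    have hmem : (⟨g * n * g⁻¹ * n⁻¹, hg⟩ : G) ∈ M := hcN
    rw [hMbot, Subgroup.mem_bot] at hmem
    have hc1 : g * n * g⁻¹ * n⁻¹ = 1 := congrArg Subtype.val hmem
    have : g * n = n * g := by
      calc g * n = (g * n * g⁻¹ * n⁻¹) * (n * g) := by group
        _ = n * g := by rw [hc1]; group
    intro x hx
    rw [Set.mem_singleton_iff] at hx
    subst hx
    exact this.symm
  · -- N ∩ G nontrivial: it's open in G, hence open in L, so N is open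
    have hMnormal : M.Normal := hN.comap G.subtype
    have hMclosed : IsClosed (M : Set G) := by
      have : (M : Set G) = (G.subtype) ⁻¹' (N : Set L) := rfl
      rw [this]
      exact hNclosed.preimage continuous_subtype_val
    have hMopen : IsOpen (M : Set G) := hji M hMnormal hMclosed hMbot
    -- the image of M in L equals ↑N ∩ ↑G, open in L since G is open
    have himg : IsOpen (Subtype.val '' (M : Set G) : Set L) :=
      hGopen.isOpenMap_subtype_val _ hMopen
    have h1 : Subtype.val '' (M : Set G) ∈ nhds (1 : L) :=
      himg.mem_nhds ⟨⟨1, G.one_mem⟩, M.one_mem, rfl⟩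
    refine Subgroup.isOpen_of_mem_nhds N (Filter.mem_of_superset h1 ?_)
    rintro x ⟨⟨y, hyG⟩, hyM, rfl⟩
    exact hyM
end

section
/- Let G be a profinite group. The following are equivalent: (i) every open subgroup U of G has a countable base of neighborhoods of the identity consisting of open subgroups of U that are topologically characteristic in U (invariant under every topological group automorphism of U); (ii) G is second countable, and for every pair of open subgroups U and V of G with V ⊆ U, there exists an open subgroup W of G with W ⊆ V that is topologically characteristic in U. -/
open Filter TopologicalSpace

/-- Proposition 7.1: A profinite group `G` is hereditarily countably characteristically
based (every open subgroup has a countable neighborhood base at the identity consisting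
of open topologically characteristic subgroups) iff `G` is second countable and for all
open subgroups `V ⊆ U` of `G` there is an open subgroup `W ⊆ V` which is topologically
characteristic in `U`. -/
theorem stmt_16 {G : Type*} [Group G] [TopologicalSpace G] [IsTopologicalGroup G]
    [CompactSpace G] [T2Space G] [TotallyDisconnectedSpace G] :
    (∀ U : Subgroup G, IsOpen (U : Set G) →
      ∃ B : ℕ → Subgroup U,
        (∀ n, IsOpen ((B n : Subgroup U) : Set U)) ∧
        (∀ n (φ : U ≃* U), Continuous φ → Continuous φ.symm →
          (B n).map φ.toMonoidHom = B n) ∧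
        (∀ s ∈ nhds (1 : U), ∃ n, ((B n : Subgroup U) : Set U) ⊆ s)) ↔
    (SecondCountableTopology G ∧
      ∀ U V : Subgroup G, IsOpen (U : Set G) → IsOpen (V : Set G) → V ≤ U →
        ∃ W : Subgroup G, IsOpen (W : Set G) ∧ W ≤ V ∧
          ∀ φ : U ≃* U, Continuous φ → Continuous φ.symm →
            (W.subgroupOf U).map φ.toMonoidHom = W.subgroupOf U) := by
  constructor
  · intro h
    constructor
    · -- Second countability
      have htop : IsOpen ((⊤ : Subgroup G) : Set G) := by
        simp only [Subgroup.coe_top]; exact isOpen_univ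
      obtain ⟨B, hBopen, -, hBbasis⟩ := h ⊤ htop
      have hBnhds : ∀ n, ((B n : Subgroup (⊤ : Subgroup G)) : Set (⊤ : Subgroup G)) ∈
          nhds (1 : (⊤ : Subgroup G)) := fun n =>
        (hBopen n).mem_nhds (B n).one_mem
      have hbasis : (nhds (1 : (⊤ : Subgroup G))).HasBasis (fun _ : ℕ => True)
          (fun n => ((B n : Subgroup (⊤ : Subgroup G)) : Set (⊤ : Subgroup G))) := by
        refine ⟨fun s => ⟨fun hs => ?_, fun ⟨n, _, hn⟩ => mem_of_superset (hBnhds n) hn⟩⟩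
        obtain ⟨n, hn⟩ := hBbasis s hs
        exact ⟨n, trivial, hn⟩
      have hoe : Topology.IsOpenEmbedding ((↑) : ((⊤ : Subgroup G) : Set G) → G) :=
        htop.isOpenEmbedding_subtypeVal
      have hmap : Filter.map (Subtype.val : (⊤ : Subgroup G) → G)
          (nhds (1 : (⊤ : Subgroup G))) = nhds (1 : G) := by
        exact hoe.map_nhds_eq (1 : (⊤ : Subgroup G))
      have hcg : (nhds (1 : G)).IsCountablyGenerated := by
        rw [← hmap]
        exact (hbasis.map _).isCountablyGenerated
      letI : UniformSpace G := IsTopologicalGroup.rightUniformSpace G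
      haveI : (uniformity G).IsCountablyGenerated := by
        rw [uniformity_eq_comap_nhds_one']
        exact Filter.comap.isCountablyGenerated _ _
      haveI : MetrizableSpace G := UniformSpace.metrizableSpace
      infer_instance
    · -- characteristic refinement
      intro U V hU hV hVU
      obtain ⟨B, hBopen, hBchar, hBbasis⟩ := h U hU
      have hVopen : IsOpen ((V.subgroupOf U : Subgroup U) : Set U) := by
        rw [Subgroup.coe_subgroupOf]
        exact hV.preimage continuous_subtype_val
      obtain ⟨n, hn⟩ := hBbasis _ (hVopen.mem_nhds (V.subgroupOf U).one_mem)
      refine ⟨(B n).map U.subtype, ?_, ?_, ?_⟩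
      · have : (((B n).map U.subtype : Subgroup G) : Set G) =
            (Subtype.val : U → G) '' (B n) := by
          simp [Subgroup.coe_map, Subgroup.coe_subtype]
        rw [this]
        exact hU.isOpenEmbedding_subtypeVal.isOpenMap _ (hBopen n)
      · rintro x ⟨y, hy, rfl⟩
        exact hn hy
      · have heq : ((B n).map U.subtype).subgroupOf U = B n :=
          Subgroup.comap_map_eq_self_of_injective U.subtype_injective _
        rw [heq]
        exact hBchar n
  · rintro ⟨hsc, hchar⟩ U hU
    haveI : (nhds (1 : G)).IsCountablyGenerated := inferInstance
    obtain ⟨s, hs⟩ := (nhds (1 : G)).exists_antitone_basis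
    -- for each n, find an open subgroup of G inside s n ∩ U
    have key : ∀ n : ℕ, ∃ W : Subgroup G, IsOpen (W : Set G) ∧ (W : Set G) ⊆ s n ∧ W ≤ U ∧
        ∀ φ : U ≃* U, Continuous φ → Continuous φ.symm →
          (W.subgroupOf U).map φ.toMonoidHom = W.subgroupOf U := by
      intro n
      have hsn : s n ∩ (U : Set G) ∈ nhds (1 : G) :=
        Filter.inter_mem (hs.mem n) (hU.mem_nhds U.one_mem)
      obtain ⟨c, hc, h1c, hcsub⟩ := (isTopologicalBasis_isClopen (X := G)).mem_nhds_iff.mp hsn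
      obtain ⟨H, hH⟩ :=
        IsTopologicalGroup.exist_openNormalSubgroup_sub_clopen_nhds_of_one hc h1c
      have hHU : H.toSubgroup ≤ U := fun x hx => (hcsub (hH hx)).2
      obtain ⟨W, hWopen, hWle, hWchar⟩ :=
        hchar U H.toSubgroup hU H.isOpen hHU
      refine ⟨W, hWopen, ?_, le_trans hWle hHU, hWchar⟩
      exact fun x hx => (hcsub (hH (hWle hx))).1
    choose W hWopen hWsub hWle hWchar using key
    refine ⟨fun n => (W n).subgroupOf U, ?_, ?_, ?_⟩
    · intro n
      rw [Subgroup.coe_subgroupOf]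
      exact (hWopen n).preimage continuous_subtype_val
    · exact fun n => hWchar n
    · intro t ht
      rw [nhds_subtype] at ht
      obtain ⟨t', ht', htsub⟩ := ht
      obtain ⟨n, hn⟩ := hs.mem_iff.mp ht'
      refine ⟨n, fun x hx => ?_⟩
      rw [Subgroup.coe_subgroupOf] at hx
      exact htsub (hn (hWsub n hx))
end

section
/- Let L be a topological group with trivial virtual center VZ(L) = {1}, and let G be an open compact subgroup of L that is a just-infinite profinite group. Suppose Δ is a subgroup of L such that: Δ is simple as an abstract group; Δ is finitely generated as an abstract group; Δ ∩ G is dense in G; and L is generated as an abstract group by Δ ∪ G. Then L is topologically simple (its only closed normal subgroups are {1} and L) and L is compactly generated (generated as a group by a compact subset). -/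
/-- Abstraction of the proof of Theorem 4.8: if `L` has trivial virtual center, an open
compact just-infinite profinite subgroup `G`, and a finitely generated abstractly simple
subgroup `Δ` with `Δ ∩ G` dense in `G` and `⟨Δ, G⟩ = L`, then `L` is topologically simple
and compactly generated. -/
theorem stmt_19 {L : Type*} [Group L] [TopologicalSpace L] [IsTopologicalGroup L]
    (hVZ : ∀ g : L, IsOpen ((Subgroup.centralizer {g} : Subgroup L) : Set L) → g = 1)
    (G : Subgroup L) (hGopen : IsOpen (G : Set L)) (hGcompact : IsCompact (G : Set L))
    (hGt2 : T2Space G) (hGtd : TotallyDisconnectedSpace G) (hGinf : Infinite G)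
    -- `G` is just-infinite
    (hji : ∀ N : Subgroup G, N.Normal → IsClosed (N : Set G) → N ≠ ⊥ →
      IsOpen (N : Set G))
    (Δ : Subgroup L)
    (hΔsimple : IsSimpleGroup Δ)
    (hΔfg : Δ.FG)
    -- `Δ ∩ G` is dense in `G`
    (hdense : (G : Set L) ⊆ closure ((Δ ⊓ G : Subgroup L) : Set L))
    -- `L` is generated (as an abstract group) by `Δ ∪ G`
    (hgen : Δ ⊔ G = ⊤) :
    Nontrivial L ∧
    (∀ N : Subgroup L, N.Normal → IsClosed (N : Set L) → N = ⊥ ∨ N = ⊤) ∧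
    ∃ K : Set L, IsCompact K ∧ Subgroup.closure K = ⊤ := by
  have hnt : Nontrivial L := by
    obtain ⟨x, y, hxy⟩ := exists_pair_ne G
    exact ⟨(x : L), (y : L), fun h => hxy (Subtype.ext h)⟩
  refine ⟨hnt, ?_, ?_⟩
  · intro N hN hNc
    rcases eq_or_ne N ⊥ with hb | hb
    · exact Or.inl hb
    refine Or.inr ?_
    -- Step 1: N ⊓ G ≠ ⊥
    have h1 : N ⊓ G ≠ ⊥ := by
      intro hbot
      obtain ⟨⟨n, hnN⟩, hn1⟩ := Subgroup.ne_bot_iff_exists_ne_one.mp hb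
      simp only [ne_eq, Subgroup.mk_eq_one] at hn1
      -- centralizer of n is open
      have hcont : Continuous fun g : L => g * n * g⁻¹ := by continuity
      have hcoset : IsOpen ((n * ·) '' (G : Set L)) :=
        (Homeomorph.mulLeft n).isOpen_image.mpr hGopen
      set U := (fun g : L => g * n * g⁻¹) ⁻¹' ((n * ·) '' (G : Set L)) with hU
      have hUopen : IsOpen U := hcoset.preimage hcont
      have h1U : (1 : L) ∈ U := by
        refine Set.mem_preimage.mpr ⟨1, one_mem G, ?_⟩
        simp
      have hsub : U ⊆ (Subgroup.centralizer {n} : Subgroup L) := by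
        intro g hg
        obtain ⟨h, hhG, hh⟩ := hg
        simp only at hh
        have hmem : n⁻¹ * (g * n * g⁻¹) ∈ N ⊓ G := by
          constructor
          · exact N.mul_mem (N.inv_mem hnN) (hN.conj_mem n hnN g)
          · have : n⁻¹ * (g * n * g⁻¹) = h := by
              rw [← hh]; group
            rw [this]; exact hhG
        rw [hbot, Subgroup.mem_bot] at hmem
        have hc : g * n * g⁻¹ = n := by
          have := congrArg (n * ·) hmem
          simpa [mul_assoc] using this
        rw [SetLike.mem_coe, Subgroup.mem_centralizer_singleton_iff]
        calc g * n = g * n * g⁻¹ * g := by group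
          _ = n * g := by rw [hc]
      have hopen : IsOpen ((Subgroup.centralizer {n} : Subgroup L) : Set L) :=
        Subgroup.isOpen_of_mem_nhds _ (Filter.mem_of_superset (hUopen.mem_nhds h1U) hsub)
      exact hn1 (hVZ n hopen)
    -- Step 2: N ⊓ G is open in L
    have hN' : IsOpen ((N.subgroupOf G : Subgroup G) : Set G) := by
      refine hji _ (hN.subgroupOf G) ?_ ?_
      · exact hNc.preimage continuous_subtype_val
      · intro hbot
        rw [Subgroup.subgroupOf_eq_bot] at hbot
        exact h1 (disjoint_iff.mp hbot)
    -- N ⊓ G open in L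
    have himg : (Subtype.val '' ((N.subgroupOf G : Subgroup G) : Set G)) =
        ((N ⊓ G : Subgroup L) : Set L) := by
      rw [Subgroup.subgroupOf, Subgroup.coe_comap, Subgroup.coe_subtype]
      ext x
      constructor
      · rintro ⟨⟨y, hyG⟩, hyN, rfl⟩
        exact ⟨hyN, hyG⟩
      · rintro ⟨hxN, hxG⟩
        exact ⟨⟨x, hxG⟩, hxN, rfl⟩
    have hNGopen : IsOpen ((N ⊓ G : Subgroup L) : Set L) := by
      rw [← himg]
      exact hGopen.isOpenEmbedding_subtypeVal.isOpenMap _ hN'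
    have hNopen : IsOpen (N : Set L) :=
      Subgroup.isOpen_of_mem_nhds _ (Filter.mem_of_superset
        (hNGopen.mem_nhds (one_mem _)) (fun x hx => hx.1))
    -- Step 3: Δ case split
    rcases hΔsimple.eq_bot_or_eq_top_of_normal (N.subgroupOf Δ) (hN.subgroupOf Δ) with hc | hc
    · -- contradiction using density
      exfalso
      rw [Subgroup.subgroupOf_eq_bot] at hc
      obtain ⟨⟨x, hxNG⟩, hx1⟩ := Subgroup.ne_bot_iff_exists_ne_one.mp h1
      simp only [ne_eq, Subgroup.mk_eq_one] at hx1
      -- G \ {1} is open in L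
      have hG1 : IsOpen (Subtype.val '' ({(1 : G)}ᶜ : Set G)) :=
        hGopen.isOpenEmbedding_subtypeVal.isOpenMap _ (isOpen_compl_singleton)
      set U : Set L := ((N ⊓ G : Subgroup L) : Set L) ∩ (Subtype.val '' ({(1 : G)}ᶜ : Set G))
        with hUdef
      have hUopen : IsOpen U := hNGopen.inter hG1
      have hxU : x ∈ U := ⟨hxNG, ⟨⟨x, hxNG.2⟩, fun h => hx1 (congrArg Subtype.val h), rfl⟩⟩
      have hxcl : x ∈ closure ((Δ ⊓ G : Subgroup L) : Set L) := hdense hxNG.2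
      obtain ⟨y, hyU, hyΔG⟩ := mem_closure_iff.mp hxcl U hUopen hxU
      have hy1 : y = 1 := by
        have : y ∈ N ⊓ Δ := ⟨hyU.1.1, hyΔG.1⟩
        rwa [disjoint_iff.mp hc, Subgroup.mem_bot] at this
      obtain ⟨⟨z, hz⟩, hzne, hzval⟩ := hyU.2
      exact hzne (Subtype.ext (hzval.trans hy1))
    · -- Δ ≤ N, conclude N = ⊤
      rw [Subgroup.subgroupOf_eq_top] at hc
      have hGN : (G : Set L) ⊆ (N : Set L) := by
        refine hdense.trans ?_
        refine closure_minimal ?_ hNc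
        exact fun x hx => hc hx.1
      have hGN' : G ≤ N := fun x hx => hGN hx
      exact top_le_iff.mp (hgen ▸ sup_le hc hGN')
  · obtain ⟨S, hS⟩ := hΔfg
    refine ⟨(S : Set L) ∪ (G : Set L), S.finite_toSet.isCompact.union hGcompact, ?_⟩
    rw [Subgroup.closure_union, hS, Subgroup.closure_eq]
    exact hgen
end
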